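/- arXiv:0910.0137 — 5 statements merged into one kernel-verified Lean document; each statement's English description precedes it below -/
import Mathlib

section
/- Under the affine property and the Chapman–Kolmogorov equations, the exponents satisfy the semiflow equations: for all s,t ≥ 0 and all u ∈ S_d^+, φ(t+s,u) = φ(t,u) + φ(s,ψ(t,u)) and ψ(t+s,u) = ψ(s,ψ(t,u)). -/
open MeasureTheory

noncomputable instance matrixMeasurableSpace (d : ℕ) :
    MeasurableSpace (Matrix (Fin d) (Fin d) ℝ) := borel _

instance matrixBorelSpace (d : ℕ) : BorelSpace (Matrix (Fin d) (Fin d) ℝ) := ⟨rfl⟩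

section Auxiliary

open Matrix

variable {d : ℕ}

lemma cont_trace (u : Matrix (Fin d) (Fin d) ℝ) :
    Continuous fun ξ : Matrix (Fin d) (Fin d) ℝ => (u * ξ).trace := by
  have h : (fun ξ : Matrix (Fin d) (Fin d) ℝ => (u * ξ).trace)
      = fun ξ => ∑ i, ∑ j, u i j * ξ j i := by
    ext ξ; simp [Matrix.trace, Matrix.diag, Matrix.mul_apply]
  rw [h]
  exact continuous_finset_sum _ fun i _ => continuous_finset_sum _ fun j _ =>
    continuous_const.mul ((continuous_apply i).comp (continuous_apply j))

lemma psd_isClosed : IsClosed {ξ : Matrix (Fin d) (Fin d) ℝ | ξ.PosSemidef} := by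
  have h : {ξ : Matrix (Fin d) (Fin d) ℝ | ξ.PosSemidef}
      = {ξ : Matrix (Fin d) (Fin d) ℝ | ξ.IsHermitian}
        ∩ ⋂ v : Fin d → ℝ, {ξ | 0 ≤ dotProduct (star v) (ξ *ᵥ v)} := by
    ext ξ
    simp only [Set.mem_setOf_eq, Set.mem_inter_iff, Set.mem_iInter, Matrix.posSemidef_iff_dotProduct_mulVec]
  rw [h]
  refine IsClosed.inter ?_ (isClosed_iInter fun v => ?_)
  · have hc : Continuous fun ξ : Matrix (Fin d) (Fin d) ℝ => ξᴴ := by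
      refine continuous_pi fun i => continuous_pi fun j => ?_
      exact continuous_star.comp ((continuous_apply i).comp (continuous_apply j))
    exact isClosed_eq hc continuous_id
  · have hc : Continuous fun ξ : Matrix (Fin d) (Fin d) ℝ =>
        dotProduct (star v) (ξ *ᵥ v) := by
      have h2 : (fun ξ : Matrix (Fin d) (Fin d) ℝ => dotProduct (star v) (ξ *ᵥ v))
          = fun ξ => ∑ i, star v i * ∑ j, ξ i j * v j := by
        ext ξ; simp [dotProduct, Matrix.mulVec]
      rw [h2]
      exact continuous_finset_sum _ fun i _ => continuous_const.mul
        (continuous_finset_sum _ fun j _ =>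
          ((continuous_apply j).comp (continuous_apply i) :
            Continuous fun ξ : Matrix (Fin d) (Fin d) ℝ => ξ i j).mul continuous_const)
    exact isClosed_le continuous_const hc

lemma trace_psd_nonneg {M : Matrix (Fin d) (Fin d) ℝ} (h : M.PosSemidef) : 0 ≤ M.trace := by
  rw [Matrix.trace]
  refine Finset.sum_nonneg fun i _ => ?_
  have := h.dotProduct_mulVec_nonneg (Pi.single i 1)
  simpa [Matrix.mulVec, dotProduct, Pi.single_apply] using this

lemma trace_mul_nonneg {u ξ : Matrix (Fin d) (Fin d) ℝ} (hu : u.PosSemidef)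
    (hξ : ξ.PosSemidef) : 0 ≤ (u * ξ).trace := by
  obtain ⟨B, rfl⟩ : ∃ B : Matrix (Fin d) (Fin d) ℝ, ξ = Bᴴ * B := by
    open scoped MatrixOrder in exact CStarAlgebra.nonneg_iff_eq_star_mul_self.mp hξ.nonneg
  have h2 : (u * (Bᴴ * B)).trace = (B * u * Bᴴ).trace := by
    rw [← Matrix.mul_assoc, Matrix.trace_mul_comm, ← Matrix.mul_assoc]
  rw [h2]
  exact trace_psd_nonneg (hu.mul_mul_conjTranspose_same B)

lemma vecMulVec_psd (v : Fin d → ℝ) : (Matrix.vecMulVec v v).PosSemidef := by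
  have h : Matrix.vecMulVec v v = (Matrix.replicateRow Unit v)ᴴ * Matrix.replicateRow Unit v := by
    ext i j
    simp [Matrix.vecMulVec_apply, Matrix.mul_apply, Matrix.replicateRow_apply]
  rw [h]
  exact Matrix.posSemidef_conjTranspose_mul_self _

lemma trace_mul_vecMulVec (C : Matrix (Fin d) (Fin d) ℝ) (v : Fin d → ℝ) :
    (C * Matrix.vecMulVec v v).trace = dotProduct v (C *ᵥ v) := by
  simp only [Matrix.trace, Matrix.diag, Matrix.mul_apply, Matrix.vecMulVec_apply,
    dotProduct, Matrix.mulVec, Finset.mul_sum]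
  exact Finset.sum_congr rfl fun i _ => Finset.sum_congr rfl fun j _ => by ring

lemma psd_trace_ext {B B' : Matrix (Fin d) (Fin d) ℝ} (hB : B.IsHermitian)
    (hB' : B'.IsHermitian)
    (h : ∀ x : Matrix (Fin d) (Fin d) ℝ, x.PosSemidef → (B * x).trace = (B' * x).trace) :
    B = B' := by
  set C := B - B' with hC
  have hCH : C.IsHermitian := hB.sub hB'
  have hsymm : ∀ i j, C j i = C i j := fun i j => by
    have := hCH.apply i j
    simpa using this
  have hq : ∀ v : Fin d → ℝ, dotProduct v (C *ᵥ v) = 0 := by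
    intro v
    have h1 := h (Matrix.vecMulVec v v) (vecMulVec_psd v)
    have h2 : (C * Matrix.vecMulVec v v).trace = 0 := by
      rw [hC, Matrix.sub_mul, Matrix.trace_sub, h1, sub_self]
    rw [← trace_mul_vecMulVec, h2]
  have hdiag : ∀ i, C i i = 0 := by
    intro i
    have := hq (Pi.single i 1)
    simpa [dotProduct, Matrix.mulVec, Pi.single_apply] using this
  have hoff : ∀ i j, C i j = 0 := by
    intro i j
    have h3 := hq (Pi.single i 1 + Pi.single j 1)
    simp only [Matrix.mulVec_add, dotProduct_add, add_dotProduct] at h3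
    have h4 : ∀ a b, dotProduct (Pi.single a (1:ℝ)) (C *ᵥ Pi.single b 1) = C a b := by
      intro a b
      simp [dotProduct, Matrix.mulVec, Pi.single_apply]
    rw [h4, h4, h4, h4, hdiag, hdiag, hsymm i j] at h3
    linarith
  have hC0 : C = 0 := by ext i j; exact hoff i j
  exact sub_eq_zero.mp hC0

lemma lint_key (μ : Measure (Matrix (Fin d) (Fin d) ℝ))
    (hμ : μ Set.univ ≤ 1) (hnull : μ {ξ : Matrix (Fin d) (Fin d) ℝ | ¬ ξ.PosSemidef} = 0)
    {u : Matrix (Fin d) (Fin d) ℝ} (hu : u.PosSemidef) {c : ℝ}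
    (hI : ∫ ξ, Real.exp (-(u * ξ).trace) ∂μ = c) :
    ∫⁻ ξ, ENNReal.ofReal (Real.exp (-(u * ξ).trace)) ∂μ = ENNReal.ofReal c := by
  have hfin : IsFiniteMeasure μ := ⟨lt_of_le_of_lt hμ ENNReal.one_lt_top⟩
  have hmeasf : Measurable fun ξ : Matrix (Fin d) (Fin d) ℝ =>
      Real.exp (-(u * ξ).trace) := (Real.continuous_exp.comp (cont_trace u).neg).measurable
  have hae : ∀ᵐ ξ ∂μ, ξ.PosSemidef := by
    rw [MeasureTheory.ae_iff]
    exact hnull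
  have hbdd : ∀ᵐ ξ ∂μ, ‖Real.exp (-(u * ξ).trace)‖ ≤ 1 := by
    filter_upwards [hae] with ξ hξ
    rw [Real.norm_eq_abs, abs_of_pos (Real.exp_pos _)]
    calc Real.exp (-(u * ξ).trace) ≤ Real.exp 0 :=
          Real.exp_le_exp.mpr (neg_nonpos.mpr (trace_mul_nonneg hu hξ))
      _ = 1 := Real.exp_zero
  have hint : Integrable (fun ξ => Real.exp (-(u * ξ).trace)) μ :=
    Integrable.mono' (integrable_const 1) hmeasf.aestronglyMeasurable hbdd
  rw [← MeasureTheory.ofReal_integral_eq_lintegral_ofReal hint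
    (Filter.Eventually.of_forall fun ξ => (Real.exp_pos _).le), hI]

end Auxiliary

/-- Let `(p_t)_{t≥0}` be a family of sub-Markovian Borel transition
kernels on the cone `S_d^+` of positive semidefinite matrices (modelled as measures on
the space of `d×d` real matrices, supported on `S_d^+`, of total mass `≤ 1`), satisfying
the Chapman–Kolmogorov equations.  Suppose the affine property holds:
`∫ e^{−⟨u,ξ⟩} p_t(x,dξ) = e^{−φ(t,u) − ⟨ψ(t,u),x⟩}` for all `t ≥ 0` and `u, x ∈ S_d^+`,
where `φ ≥ 0` and `ψ` takes values in `S_d^+` and `⟨a,b⟩ = tr(ab)`.  Then the exponents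
satisfy the semiflow equations
`φ(t+s,u) = φ(t,u) + φ(s,ψ(t,u))` and `ψ(t+s,u) = ψ(s,ψ(t,u))`. -/
theorem affine_exponents_semiflow {d : ℕ}
    (p : ℝ → Matrix (Fin d) (Fin d) ℝ → Measure (Matrix (Fin d) (Fin d) ℝ))
    (φ : ℝ → Matrix (Fin d) (Fin d) ℝ → ℝ)
    (ψ : ℝ → Matrix (Fin d) (Fin d) ℝ → Matrix (Fin d) (Fin d) ℝ)
    (hmeas : ∀ t : ℝ, 0 ≤ t → ∀ A : Set (Matrix (Fin d) (Fin d) ℝ), MeasurableSet A →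
      Measurable (fun ξ => p t ξ A))
    (hsupp : ∀ t : ℝ, 0 ≤ t → ∀ x : Matrix (Fin d) (Fin d) ℝ, x.PosSemidef →
      p t x {ξ : Matrix (Fin d) (Fin d) ℝ | ¬ ξ.PosSemidef} = 0)
    (hsub : ∀ t : ℝ, 0 ≤ t → ∀ x : Matrix (Fin d) (Fin d) ℝ, x.PosSemidef →
      p t x Set.univ ≤ 1)
    (hCK : ∀ s t : ℝ, 0 ≤ s → 0 ≤ t → ∀ x : Matrix (Fin d) (Fin d) ℝ, x.PosSemidef →
      ∀ A : Set (Matrix (Fin d) (Fin d) ℝ), MeasurableSet A →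
        A ⊆ {ξ : Matrix (Fin d) (Fin d) ℝ | ξ.PosSemidef} →
        p (t + s) x A = ∫⁻ ξ, p s ξ A ∂(p t x))
    (hφ : ∀ t : ℝ, 0 ≤ t → ∀ u : Matrix (Fin d) (Fin d) ℝ, u.PosSemidef → 0 ≤ φ t u)
    (hψ : ∀ t : ℝ, 0 ≤ t → ∀ u : Matrix (Fin d) (Fin d) ℝ, u.PosSemidef →
      (ψ t u).PosSemidef)
    (haff : ∀ t : ℝ, 0 ≤ t → ∀ u x : Matrix (Fin d) (Fin d) ℝ,
      u.PosSemidef → x.PosSemidef →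
      ∫ ξ, Real.exp (-(u * ξ).trace) ∂(p t x)
        = Real.exp (-(φ t u) - ((ψ t u) * x).trace)) :
    ∀ s t : ℝ, 0 ≤ s → 0 ≤ t → ∀ u : Matrix (Fin d) (Fin d) ℝ, u.PosSemidef →
      φ (t + s) u = φ t u + φ s (ψ t u) ∧ ψ (t + s) u = ψ s (ψ t u) := by
  intro s t hs ht u hu
  have hst : (0:ℝ) ≤ s + t := by linarith
  have hψt : (ψ t u).PosSemidef := hψ t ht u hu
  have hψst : (ψ (s + t) u).PosSemidef := hψ (s + t) hst u hu
  have hψs : (ψ s (ψ t u)).PosSemidef := hψ s hs (ψ t u) hψt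
  set P : Set (Matrix (Fin d) (Fin d) ℝ) := {ξ | ξ.PosSemidef} with hPdef
  have hPmeas : MeasurableSet P := psd_isClosed.measurableSet
  have hmeasp : Measurable (p t) :=
    Measure.measurable_of_measurable_coe _ (fun A hA => hmeas t ht A hA)
  have hsplit : ∀ (q : ℝ), 0 ≤ q → ∀ y : Matrix (Fin d) (Fin d) ℝ, y.PosSemidef →
      ∀ A : Set (Matrix (Fin d) (Fin d) ℝ), p q y A = p q y (A ∩ P) := by
    intro q hq y hy A
    have h1 := measure_inter_add_diff (μ := p q y) A hPmeas
    have h2 : p q y (A \ P) = 0 :=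
      measure_mono_null (fun ξ hξ => hξ.2) (hsupp q hq y hy)
    rw [← h1, h2, add_zero]
  have hbind : ∀ x : Matrix (Fin d) (Fin d) ℝ, x.PosSemidef →
      p (s + t) x = (p s x).bind (p t) := by
    intro x hx
    ext A hA
    rw [Measure.bind_apply hA hmeasp.aemeasurable]
    have hCK' := hCK t s ht hs x hx (A ∩ P) (hA.inter hPmeas) Set.inter_subset_right
    rw [hsplit (s + t) hst x hx A, hCK']
    have hae : ∀ᵐ ξ ∂(p s x), ξ.PosSemidef := by
      rw [MeasureTheory.ae_iff]; exact hsupp s hs x hx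
    refine (lintegral_congr_ae ?_).symm
    filter_upwards [hae] with ξ hξ
    exact hsplit t ht ξ hξ A
  have hFmeas : Measurable fun ξ => ENNReal.ofReal (Real.exp (-(u * ξ).trace)) :=
    ENNReal.measurable_ofReal.comp (Real.continuous_exp.comp (cont_trace u).neg).measurable
  have hGmeas : Measurable fun ξ => ENNReal.ofReal (Real.exp (-((ψ t u) * ξ).trace)) :=
    ENNReal.measurable_ofReal.comp
      (Real.continuous_exp.comp (cont_trace (ψ t u)).neg).measurable
  have key : ∀ x : Matrix (Fin d) (Fin d) ℝ, x.PosSemidef →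
      -(φ (s + t) u) - (ψ (s + t) u * x).trace
        = -(φ t u + φ s (ψ t u)) - (ψ s (ψ t u) * x).trace := by
    intro x hx
    have h1 : ∫⁻ ξ, ENNReal.ofReal (Real.exp (-(u * ξ).trace)) ∂(p (s + t) x)
        = ENNReal.ofReal (Real.exp (-(φ (s + t) u) - (ψ (s + t) u * x).trace)) :=
      lint_key _ (hsub _ hst x hx) (hsupp _ hst x hx) hu (haff _ hst u x hu hx)
    have h2 : ∫⁻ ξ, ENNReal.ofReal (Real.exp (-(u * ξ).trace)) ∂(p (s + t) x)
        = ∫⁻ ξ', (∫⁻ ξ, ENNReal.ofReal (Real.exp (-(u * ξ).trace)) ∂(p t ξ')) ∂(p s x) := by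
      rw [hbind x hx, Measure.lintegral_bind hmeasp.aemeasurable hFmeas.aemeasurable]
    have hae : ∀ᵐ ξ ∂(p s x), ξ.PosSemidef := by
      rw [MeasureTheory.ae_iff]; exact hsupp s hs x hx
    have h3 : ∫⁻ ξ', (∫⁻ ξ, ENNReal.ofReal (Real.exp (-(u * ξ).trace)) ∂(p t ξ')) ∂(p s x)
        = ∫⁻ ξ', ENNReal.ofReal (Real.exp (-(φ t u))) *
            ENNReal.ofReal (Real.exp (-((ψ t u) * ξ').trace)) ∂(p s x) := by
      refine lintegral_congr_ae ?_
      filter_upwards [hae] with ξ' hξ'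
      rw [lint_key _ (hsub t ht ξ' hξ') (hsupp t ht ξ' hξ') hu (haff t ht u ξ' hu hξ'),
        ← ENNReal.ofReal_mul (Real.exp_pos _).le, ← Real.exp_add]
      ring_nf
    have h4 : ∫⁻ ξ', ENNReal.ofReal (Real.exp (-((ψ t u) * ξ').trace)) ∂(p s x)
        = ENNReal.ofReal (Real.exp (-(φ s (ψ t u)) - (ψ s (ψ t u) * x).trace)) :=
      lint_key _ (hsub s hs x hx) (hsupp s hs x hx) hψt (haff s hs (ψ t u) x hψt hx)
    have h5 : ENNReal.ofReal (Real.exp (-(φ (s + t) u) - (ψ (s + t) u * x).trace))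
        = ENNReal.ofReal (Real.exp (-(φ t u + φ s (ψ t u)) - (ψ s (ψ t u) * x).trace)) := by
      rw [← h1, h2, h3, lintegral_const_mul _ hGmeas, h4,
        ← ENNReal.ofReal_mul (Real.exp_pos _).le, ← Real.exp_add]
      ring_nf
    have h6 := (ENNReal.ofReal_eq_ofReal_iff (Real.exp_pos _).le (Real.exp_pos _).le).mp h5
    exact Real.exp_eq_exp.mp h6
  have hφeq : φ (s + t) u = φ t u + φ s (ψ t u) := by
    have h0 := key 0 Matrix.PosSemidef.zero
    simp only [mul_zero, Matrix.trace_zero, sub_zero, neg_inj] at h0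
    exact h0
  have hψeq : ψ (s + t) u = ψ s (ψ t u) := by
    refine psd_trace_ext hψst.isHermitian hψs.isHermitian fun x hx => ?_
    have h0 := key x hx
    rw [hφeq] at h0
    linarith
  rw [add_comm t s]
  exact ⟨hφeq, hψeq⟩
end

section
/- Let ψ: [0,∞) × S_d^+ → S_d^+ satisfy: ψ(0,u) = u for all u ∈ S_d^+; the semiflow property ψ(t+s,u) = ψ(s,ψ(t,u)) for all s,t ≥ 0; the order-preservation property that v ⪯ u implies ψ(t,v) ⪯ ψ(t,u) for all t ≥ 0; ψ is jointly continuous on [0,∞) × S_d^+; and for each fixed t ≥ 0, the map u ↦ ψ(t,u) is real-analytic on the open set S_d^{++}. Then ψ(t,u) ∈ S_d^{++} for all t ≥ 0 and all u ∈ S_d^{++}. -/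
attribute [local instance] Matrix.normedAddCommGroup Matrix.normedSpace

open Matrix Set Filter Metric

namespace SemiflowAux

variable {d : ℕ}

lemma quad_add (A B : Matrix (Fin d) (Fin d) ℝ) (x : Fin d → ℝ) :
    x ⬝ᵥ (A + B) *ᵥ x = x ⬝ᵥ A *ᵥ x + x ⬝ᵥ B *ᵥ x := by
  simp [Matrix.add_mulVec, dotProduct_add]

lemma quad_sub (A B : Matrix (Fin d) (Fin d) ℝ) (x : Fin d → ℝ) :
    x ⬝ᵥ (A - B) *ᵥ x = x ⬝ᵥ A *ᵥ x - x ⬝ᵥ B *ᵥ x := by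
  simp [Matrix.sub_mulVec, dotProduct_sub]

lemma quad_smul_mat (c : ℝ) (A : Matrix (Fin d) (Fin d) ℝ) (x : Fin d → ℝ) :
    x ⬝ᵥ (c • A) *ᵥ x = c * (x ⬝ᵥ A *ᵥ x) := by
  simp [Matrix.smul_mulVec, dotProduct_smul]

lemma quad_one (x : Fin d → ℝ) :
    x ⬝ᵥ (1 : Matrix (Fin d) (Fin d) ℝ) *ᵥ x = x ⬝ᵥ x := by
  simp

lemma quad_smul_vec (c : ℝ) (M : Matrix (Fin d) (Fin d) ℝ) (x : Fin d → ℝ) :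
    (c • x) ⬝ᵥ M *ᵥ (c • x) = c ^ 2 * (x ⬝ᵥ M *ᵥ x) := by
  rw [Matrix.mulVec_smul, smul_dotProduct, dotProduct_smul]
  simp [smul_eq_mul]; ring

lemma herm_smul_one (c : ℝ) : (c • (1 : Matrix (Fin d) (Fin d) ℝ)).IsHermitian := by
  unfold Matrix.IsHermitian
  ext i j
  simp [Matrix.conjTranspose_apply, Matrix.one_apply, eq_comm]

lemma psd_smul_one {c : ℝ} (hc : 0 ≤ c) :
    (c • (1 : Matrix (Fin d) (Fin d) ℝ)).PosSemidef := by
  refine Matrix.PosSemidef.of_dotProduct_mulVec_nonneg (herm_smul_one c) fun x => ?_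
  rw [star_trivial, quad_smul_mat, quad_one]
  exact mul_nonneg hc (Finset.sum_nonneg fun i _ => mul_self_nonneg _)

lemma quad_abs_le (M : Matrix (Fin d) (Fin d) ℝ) (x : Fin d → ℝ) :
    |x ⬝ᵥ M *ᵥ x| ≤ ‖M‖ * (∑ i, |x i|) ^ 2 := by
  have hM : ∀ i j, |M i j| ≤ ‖M‖ := fun i j => M.norm_entry_le_entrywise_sup_norm
  calc |x ⬝ᵥ M *ᵥ x| = |∑ i, ∑ j, x i * (M i j * x j)| := by
        simp [dotProduct, mulVec, Finset.mul_sum]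
    _ ≤ ∑ i, |∑ j, x i * (M i j * x j)| := Finset.abs_sum_le_sum_abs _ _
    _ ≤ ∑ i, ∑ j, |x i| * (‖M‖ * |x j|) := by
        refine Finset.sum_le_sum fun i _ => ?_
        refine (Finset.abs_sum_le_sum_abs _ _).trans ?_
        refine Finset.sum_le_sum fun j _ => ?_
        rw [abs_mul, abs_mul]
        exact mul_le_mul_of_nonneg_left
          (mul_le_mul_of_nonneg_right (hM i j) (abs_nonneg _)) (abs_nonneg _)
    _ = ‖M‖ * (∑ i, |x i|) ^ 2 := by
        rw [sq, Finset.sum_mul_sum, Finset.mul_sum]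
        refine Finset.sum_congr rfl fun i _ => ?_
        rw [Finset.mul_sum]
        exact Finset.sum_congr rfl fun j _ => by ring

lemma posDef_of_unit {M : Matrix (Fin d) (Fin d) ℝ} (hH : M.IsHermitian)
    (h : ∀ y : Fin d → ℝ, ‖y‖ = 1 → 0 < y ⬝ᵥ M *ᵥ y) : M.PosDef := by
  refine Matrix.PosDef.of_dotProduct_mulVec_pos hH fun x hx => ?_
  rw [star_trivial]
  have hxn : ‖x‖ ≠ 0 := norm_ne_zero_iff.mpr hx
  have hyn : ‖(‖x‖⁻¹ • x)‖ = 1 := by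
    rw [norm_smul, norm_inv, norm_norm, inv_mul_cancel₀ hxn]
  have hpos := h _ hyn
  have hxy : x = ‖x‖ • (‖x‖⁻¹ • x) := by
    rw [smul_smul, mul_inv_cancel₀ hxn, one_smul]
  rw [hxy, quad_smul_vec]
  exact mul_pos (by positivity) hpos

lemma exists_min_quad {P : Matrix (Fin d) (Fin d) ℝ} (hP : P.PosDef) :
    ∃ m > 0, ∀ y : Fin d → ℝ, ‖y‖ = 1 → m ≤ y ⬝ᵥ P *ᵥ y := by
  rcases Nat.eq_zero_or_pos d with hd | hd
  · subst hd
    exact ⟨1, one_pos, fun y hy => absurd hy (by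
      rw [Subsingleton.elim y 0, norm_zero]; norm_num)⟩
  · haveI : Nonempty (Fin d) := ⟨⟨0, hd⟩⟩
    have hne : (sphere (0 : Fin d → ℝ) 1).Nonempty :=
      NormedSpace.sphere_nonempty.mpr zero_le_one
    have hc : Continuous (fun y : Fin d → ℝ => y ⬝ᵥ P *ᵥ y) := by
      simp only [dotProduct, mulVec]
      exact continuous_finset_sum _ fun i _ =>
        (continuous_apply i).mul (continuous_finset_sum _ fun j _ =>
          continuous_const.mul (continuous_apply j))
    obtain ⟨y₀, hy₀, hmin⟩ :=
      (isCompact_sphere (0 : Fin d → ℝ) 1).exists_isMinOn hne hc.continuousOn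
    have hy₀1 : ‖y₀‖ = 1 := mem_sphere_zero_iff_norm.mp hy₀
    have hy₀ne : y₀ ≠ 0 := by
      intro h; rw [h, norm_zero] at hy₀1; exact zero_ne_one hy₀1
    have hpos : 0 < y₀ ⬝ᵥ P *ᵥ y₀ := by
      have := hP.dotProduct_mulVec_pos hy₀ne; rwa [star_trivial] at this
    exact ⟨_, hpos, fun y hy => hmin (mem_sphere_zero_iff_norm.mpr hy)⟩

lemma dot_self_le {y : Fin d → ℝ} (hy : ‖y‖ = 1) : y ⬝ᵥ y ≤ d := by
  have : ∀ i, y i * y i ≤ 1 := by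
    intro i
    have h1 : |y i| ≤ 1 := by simpa [hy] using norm_le_pi_norm y i
    nlinarith [abs_nonneg (y i), sq_abs (y i)]
  calc y ⬝ᵥ y = ∑ i, y i * y i := rfl
    _ ≤ ∑ _i : Fin d, (1 : ℝ) := Finset.sum_le_sum fun i _ => this i
    _ = d := by simp

lemma abs_sum_le {y : Fin d → ℝ} (hy : ‖y‖ = 1) : (∑ i, |y i|) ≤ d := by
  calc (∑ i, |y i|) ≤ ∑ _i : Fin d, (1 : ℝ) :=
        Finset.sum_le_sum fun i _ => by simpa [hy] using norm_le_pi_norm y i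
    _ = d := by simp

lemma posDef_shift {u₀ : Matrix (Fin d) (Fin d) ℝ} (hP : u₀.PosDef) :
    ∃ ε > 0, ∀ l : ℝ, -ε < l → (u₀ + l • 1).PosDef := by
  obtain ⟨m, hm, hmin⟩ := exists_min_quad hP
  refine ⟨m / (d + 1), by positivity, fun l hl => ?_⟩
  apply posDef_of_unit (hP.1.add (herm_smul_one l))
  intro y hy
  rw [quad_add, quad_smul_mat, quad_one]
  have h1 := hmin y hy
  have h2 := dot_self_le hy
  have h3 : (0:ℝ) ≤ y ⬝ᵥ y := Finset.sum_nonneg fun i _ => mul_self_nonneg _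
  rcases le_or_gt 0 l with h4 | h4
  · nlinarith
  · have h5 : l * (y ⬝ᵥ y) ≥ l * d := by nlinarith
    have h6 : m / (d + 1) * d < m := by
      rw [div_mul_eq_mul_div, div_lt_iff₀ (by positivity)]
      nlinarith
    nlinarith

lemma posDef_nearby {P : Matrix (Fin d) (Fin d) ℝ} (hP : P.PosDef) :
    ∃ δ > 0, ∀ M : Matrix (Fin d) (Fin d) ℝ, M.IsHermitian → ‖M - P‖ < δ → M.PosDef := by
  obtain ⟨m, hm, hmin⟩ := exists_min_quad hP
  refine ⟨m / ((d:ℝ)^2 + 1), by positivity, fun M hH hnear => ?_⟩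
  apply posDef_of_unit hH
  intro y hy
  have h1 : |y ⬝ᵥ (M - P) *ᵥ y| ≤ ‖M - P‖ * (∑ i, |y i|) ^ 2 := quad_abs_le _ _
  have h2 : (∑ i, |y i|) ≤ d := abs_sum_le hy
  have h2' : (0:ℝ) ≤ ∑ i, |y i| := Finset.sum_nonneg fun i _ => abs_nonneg _
  have h3 := hmin y hy
  have h4 := quad_sub M P y
  have h2sq : (∑ i, |y i|) ^ 2 ≤ (d:ℝ)^2 := by nlinarith
  have h5 : ‖M - P‖ * (∑ i, |y i|) ^ 2 ≤ ‖M - P‖ * (d:ℝ)^2 :=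
    mul_le_mul_of_nonneg_left h2sq (norm_nonneg _)
  have h6 : ‖M - P‖ * (d:ℝ)^2 < m := by
    have hd2 : (0:ℝ) < (d:ℝ)^2 + 1 := by positivity
    have hn := norm_nonneg (M - P)
    have := (lt_div_iff₀ hd2).mp hnear
    nlinarith
  have h7 := abs_le.mp h1
  nlinarith

lemma dominate {u₀ v : Matrix (Fin d) (Fin d) ℝ} (h0 : u₀.PosSemidef) (hv : v.PosSemidef) :
    (u₀ + ((d : ℝ) * ‖v‖) • 1 - v).PosSemidef := by
  refine Matrix.PosSemidef.of_dotProduct_mulVec_nonneg ((h0.1.add (herm_smul_one _)).sub hv.1) fun x => ?_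
  rw [star_trivial, quad_sub, quad_add, quad_smul_mat, quad_one]
  have h1 : |x ⬝ᵥ v *ᵥ x| ≤ ‖v‖ * (∑ i, |x i|) ^ 2 := quad_abs_le _ _
  have h2 : (∑ i, |x i|) ^ 2 ≤ (d:ℝ) * ∑ i, |x i| ^ 2 := by
    have := sq_sum_le_card_mul_sum_sq (s := (Finset.univ : Finset (Fin d)))
      (f := fun i => |x i|)
    simpa using this
  have h3 : (∑ i, |x i| ^ 2) = x ⬝ᵥ x := by
    refine Finset.sum_congr rfl fun i _ => ?_
    rw [sq_abs, sq]
  have h4 : (0:ℝ) ≤ x ⬝ᵥ u₀ *ᵥ x := by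
    have := h0.dotProduct_mulVec_nonneg x; rwa [star_trivial] at this
  have h5 := abs_le.mp h1
  have h6 := norm_nonneg v
  have h7 : ‖v‖ * (∑ i, |x i|)^2 ≤ ‖v‖ * ((d:ℝ) * ∑ i, |x i|^2) :=
    mul_le_mul_of_nonneg_left h2 h6
  rw [h3] at h7
  nlinarith [h5.2]

end SemiflowAux

open SemiflowAux

/-- Degeneracy lemma: if for some positive definite `u₀` the matrix `ψ t u₀` fails
to be positive definite, then there is a single nonzero vector `x` killed by `ψ t v`
for every positive semidefinite `v`. -/
lemma semiflow_degeneracy {d : ℕ}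
    (ψ : ℝ → Matrix (Fin d) (Fin d) ℝ → Matrix (Fin d) (Fin d) ℝ)
    (hmaps : ∀ t : ℝ, 0 ≤ t → ∀ u : Matrix (Fin d) (Fin d) ℝ, u.PosSemidef →
      (ψ t u).PosSemidef)
    (horder : ∀ t : ℝ, 0 ≤ t → ∀ u v : Matrix (Fin d) (Fin d) ℝ,
      u.PosSemidef → v.PosSemidef → (u - v).PosSemidef →
      (ψ t u - ψ t v).PosSemidef)
    (hanalytic : ∀ t : ℝ, 0 ≤ t →
      AnalyticOnNhd ℝ (ψ t) {u : Matrix (Fin d) (Fin d) ℝ | u.PosDef})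
    {t : ℝ} (ht : 0 ≤ t) {u₀ : Matrix (Fin d) (Fin d) ℝ} (hu₀ : u₀.PosDef)
    (hbad : ¬ (ψ t u₀).PosDef) :
    ∃ x : Fin d → ℝ, x ≠ 0 ∧ ∀ v : Matrix (Fin d) (Fin d) ℝ, v.PosSemidef →
      (ψ t v) *ᵥ x = 0 := by
  classical
  have hpsd := hmaps t ht u₀ hu₀.posSemidef
  -- find a null vector of `ψ t u₀`
  obtain ⟨x, hx0, hxq⟩ : ∃ x : Fin d → ℝ, x ≠ 0 ∧ x ⬝ᵥ (ψ t u₀) *ᵥ x = 0 := by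
    by_contra h
    push_neg at h
    refine hbad (Matrix.PosDef.of_dotProduct_mulVec_pos hpsd.1 fun x hx0 => ?_)
    rw [star_trivial]
    have h2 := hpsd.dotProduct_mulVec_nonneg x
    rw [star_trivial] at h2
    exact lt_of_le_of_ne h2 (Ne.symm (h x hx0))
  obtain ⟨ε, hε, hshift⟩ := posDef_shift hu₀
  set f : ℝ → ℝ := fun l => x ⬝ᵥ (ψ t (u₀ + l • 1)) *ᵥ x with hf
  -- analyticity of f on Ioi (-ε)
  have hfa : AnalyticOnNhd ℝ f (Set.Ioi (-ε)) := by
    intro l hl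
    have h1 : AnalyticAt ℝ (fun l : ℝ => u₀ + l • (1 : Matrix (Fin d) (Fin d) ℝ)) l :=
      analyticAt_const.add ((analyticAt_id).smul analyticAt_const)
    have h2 : AnalyticAt ℝ (ψ t) (u₀ + l • 1) := hanalytic t ht _ (hshift l hl)
    have h3 : AnalyticAt ℝ (fun M : Matrix (Fin d) (Fin d) ℝ => x ⬝ᵥ M *ᵥ x)
        (ψ t (u₀ + l • 1)) := by
      let L : Matrix (Fin d) (Fin d) ℝ →ₗ[ℝ] ℝ :=
        { toFun := fun M => x ⬝ᵥ M *ᵥ x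
          map_add' := fun A B => quad_add A B x
          map_smul' := fun c A => by simpa using quad_smul_mat c A x }
      exact (LinearMap.toContinuousLinearMap L).analyticAt _
    have h21 : AnalyticAt ℝ ((ψ t) ∘ (fun l : ℝ => u₀ + l • 1)) l :=
      AnalyticAt.comp (g := ψ t) (f := fun l : ℝ => u₀ + l • 1) h2 h1
    have h321 : AnalyticAt ℝ ((fun M : Matrix (Fin d) (Fin d) ℝ => x ⬝ᵥ M *ᵥ x) ∘
        ((ψ t) ∘ (fun l : ℝ => u₀ + l • 1))) l :=
      AnalyticAt.comp (g := fun M : Matrix (Fin d) (Fin d) ℝ => x ⬝ᵥ M *ᵥ x)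
        (f := (ψ t) ∘ (fun l : ℝ => u₀ + l • 1)) (x := l) h3 h21
    simpa [Function.comp_def] using h321
  -- f vanishes on (-ε, 0]
  have hnonneg : ∀ l : ℝ, -ε < l → 0 ≤ f l := by
    intro l hl
    have := (hmaps t ht _ (hshift l hl).posSemidef).dotProduct_mulVec_nonneg x
    rwa [star_trivial] at this
  have hzero : ∀ l : ℝ, -ε < l → l ≤ 0 → f l = 0 := by
    intro l hl hl0
    have hsub : u₀ - (u₀ + l • 1) = (-l) • (1 : Matrix (Fin d) (Fin d) ℝ) := by
      rw [neg_smul]; abel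
    have hord := horder t ht u₀ (u₀ + l • 1) hu₀.posSemidef (hshift l hl).posSemidef
      (by rw [hsub]; exact psd_smul_one (by linarith))
    have h5 := hord.dotProduct_mulVec_nonneg x
    rw [star_trivial, quad_sub] at h5
    have h6 := hnonneg l hl
    simp only [hf] at h6 ⊢
    linarith [hxq ▸ h5]
  -- identity theorem
  have heq : Set.EqOn f 0 (Set.Ioi (-ε)) := by
    apply hfa.eqOn_zero_of_preconnected_of_eventuallyEq_zero isPreconnected_Ioi
      (z₀ := -ε/2) (by simp; linarith)
    have hmem : Set.Ioo (-ε) 0 ∈ nhds (-ε/2) := Ioo_mem_nhds (by linarith) (by linarith)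
    exact Filter.eventuallyEq_of_mem hmem fun l hl => hzero l hl.1 hl.2.le
  -- conclude
  refine ⟨x, hx0, fun v hv => ?_⟩
  set l : ℝ := (d : ℝ) * ‖v‖ with hldef
  have hl0 : 0 ≤ l := by positivity
  have hlε : -ε < l := by linarith
  have hfl : f l = 0 := heq (by simpa using hlε)
  have hord := horder t ht (u₀ + l • 1) v (hshift l hlε).posSemidef hv
    (dominate hu₀.posSemidef hv)
  have h5 := hord.dotProduct_mulVec_nonneg x
  rw [star_trivial, quad_sub] at h5
  have h6 : (0:ℝ) ≤ x ⬝ᵥ (ψ t v) *ᵥ x := by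
    have := (hmaps t ht v hv).dotProduct_mulVec_nonneg x; rwa [star_trivial] at this
  have h7 : x ⬝ᵥ (ψ t v) *ᵥ x = 0 := by
    have : x ⬝ᵥ (ψ t (u₀ + l • 1)) *ᵥ x = 0 := hfl
    linarith
  have := ((hmaps t ht v hv).dotProduct_mulVec_zero_iff x)
  rw [star_trivial] at this
  exact this.mp h7

/-- Let `ψ : [0,∞) × S_d^+ → S_d^+` satisfy `ψ(0,u) = u`, the semiflow
property `ψ(t+s,u) = ψ(s,ψ(t,u))`, the order-preservation property (`v ⪯ u` implies
`ψ(t,v) ⪯ ψ(t,u)`), joint continuity on `[0,∞) × S_d^+`, and real-analyticity of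
`u ↦ ψ(t,u)` on the open cone `S_d^{++}` of positive definite matrices for each fixed
`t ≥ 0`.  Then `ψ(t,u)` is positive definite for all `t ≥ 0` and all positive
definite `u`. -/
theorem semiflow_preserves_posdef {d : ℕ}
    (ψ : ℝ → Matrix (Fin d) (Fin d) ℝ → Matrix (Fin d) (Fin d) ℝ)
    (hmaps : ∀ t : ℝ, 0 ≤ t → ∀ u : Matrix (Fin d) (Fin d) ℝ, u.PosSemidef →
      (ψ t u).PosSemidef)
    (hzero : ∀ u : Matrix (Fin d) (Fin d) ℝ, u.PosSemidef → ψ 0 u = u)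
    (hflow : ∀ s t : ℝ, 0 ≤ s → 0 ≤ t → ∀ u : Matrix (Fin d) (Fin d) ℝ, u.PosSemidef →
      ψ (t + s) u = ψ s (ψ t u))
    (horder : ∀ t : ℝ, 0 ≤ t → ∀ u v : Matrix (Fin d) (Fin d) ℝ,
      u.PosSemidef → v.PosSemidef → (u - v).PosSemidef →
      (ψ t u - ψ t v).PosSemidef)
    (hcont : ContinuousOn (fun q : ℝ × Matrix (Fin d) (Fin d) ℝ => ψ q.1 q.2)
      (Set.Ici (0 : ℝ) ×ˢ {u : Matrix (Fin d) (Fin d) ℝ | u.PosSemidef}))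
    (hanalytic : ∀ t : ℝ, 0 ≤ t →
      AnalyticOnNhd ℝ (ψ t) {u : Matrix (Fin d) (Fin d) ℝ | u.PosDef}) :
    ∀ t : ℝ, 0 ≤ t → ∀ u : Matrix (Fin d) (Fin d) ℝ, u.PosDef → (ψ t u).PosDef := by
  classical
  -- if `ψ t 1` is PD then `ψ t u` is PD for every PD `u`
  have key : ∀ t : ℝ, 0 ≤ t → (ψ t 1).PosDef →
      ∀ u : Matrix (Fin d) (Fin d) ℝ, u.PosDef → (ψ t u).PosDef := by
    intro t ht h1 u hu
    by_contra hbad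
    obtain ⟨x, hx0, hker⟩ := semiflow_degeneracy ψ hmaps horder hanalytic ht hu hbad
    have h2 := hker 1 Matrix.PosSemidef.one
    have h3 := h1.dotProduct_mulVec_pos hx0
    rw [star_trivial, h2] at h3
    simp at h3
  intro t ht
  suffices h : (ψ t 1).PosDef by exact key t ht h
  set A : Set ℝ := {s : ℝ | s ∈ Set.Icc 0 t ∧ (ψ s 1).PosDef} with hA
  have hA0 : (0 : ℝ) ∈ A := by
    refine ⟨⟨le_refl 0, ht⟩, ?_⟩
    rw [hzero 1 Matrix.PosSemidef.one]
    exact Matrix.PosDef.one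
  have hAne : A.Nonempty := ⟨0, hA0⟩
  have hbdd : BddAbove A := ⟨t, fun s hs => hs.1.2⟩
  -- A is downward closed
  have hdown : ∀ s ∈ A, ∀ r : ℝ, 0 ≤ r → r ≤ s → r ∈ A := by
    intro s hs r hr0 hrs
    refine ⟨⟨hr0, hrs.trans hs.1.2⟩, ?_⟩
    by_contra hbad
    obtain ⟨x, hx0, hker⟩ :=
      semiflow_degeneracy ψ hmaps horder hanalytic hr0 Matrix.PosDef.one hbad
    have hw : (ψ (s - r) 1).PosSemidef := hmaps _ (by linarith) 1 Matrix.PosSemidef.one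
    have hflow' : ψ s 1 = ψ r (ψ (s - r) 1) := by
      have h := hflow r (s - r) hr0 (by linarith) 1 Matrix.PosSemidef.one
      rwa [sub_add_cancel] at h
    have h0 : (ψ s 1) *ᵥ x = 0 := by rw [hflow']; exact hker _ hw
    have h1 := hs.2.dotProduct_mulVec_pos hx0
    rw [star_trivial, h0] at h1
    simp at h1
  set c : ℝ := sSup A with hc
  have hc0 : 0 ≤ c := le_csSup hbdd hA0
  have hct : c ≤ t := csSup_le hAne fun a ha => ha.1.2
  -- everything below c is in A
  have hbelow : ∀ r : ℝ, 0 ≤ r → r < c → r ∈ A := by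
    intro r hr0 hrc
    obtain ⟨a, haA, hra⟩ := exists_lt_of_lt_csSup hAne hrc
    exact hdown a haA r hr0 hra.le
  -- c itself is in A
  have hcA : c ∈ A := by
    rcases eq_or_lt_of_le hc0 with h0c | h0c
    · exact h0c ▸ hA0
    · have hc2 : c / 2 ∈ A := hbelow (c/2) (by linarith) (by linarith)
      have hkey := key (c/2) (by linarith) hc2.2
      have hflow' : ψ c 1 = ψ (c/2) (ψ (c/2) 1) := by
        have h := hflow (c/2) (c/2) (by linarith) (by linarith) 1 Matrix.PosSemidef.one
        rwa [add_halves] at h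
      refine ⟨⟨hc0, hct⟩, ?_⟩
      rw [hflow']
      exact hkey _ hc2.2
  -- c must equal t
  rcases eq_or_lt_of_le hct with hfin | hlt
  · rw [← hfin]; exact hcA.2
  · exfalso
    obtain ⟨δ, hδ, hnear⟩ := posDef_nearby hcA.2
    -- continuity of s ↦ ψ s 1 within Ici 0 at c
    have hcont1 : ContinuousWithinAt (fun s : ℝ => ψ s 1) (Set.Ici 0) c := by
      have hmaps2 : Set.MapsTo (fun s : ℝ => (s, (1 : Matrix (Fin d) (Fin d) ℝ)))
          (Set.Ici 0) (Set.Ici (0:ℝ) ×ˢ {u : Matrix (Fin d) (Fin d) ℝ | u.PosSemidef}) :=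
        fun s hs => ⟨hs, Matrix.PosSemidef.one⟩
      exact (hcont.comp ((continuous_id.prodMk continuous_const).continuousOn) hmaps2) c hc0
    have hev : ∀ᶠ s in nhdsWithin c (Set.Ici 0), ‖ψ s 1 - ψ c 1‖ < δ := by
      have h := hcont1 (Metric.ball_mem_nhds _ hδ)
      refine Filter.eventually_of_mem h ?_
      intro s hs
      rw [Set.mem_preimage, Metric.mem_ball, dist_eq_norm] at hs
      exact hs
    have hsub : Set.Ioc c t ⊆ Set.Ici (0:ℝ) := fun s hs => le_trans hc0 hs.1.le
    haveI : (nhdsWithin c (Set.Ioc c t)).NeBot := by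
      rw [nhdsWithin_Ioc_eq_nhdsGT hlt]
      exact nhdsGT_neBot c
    have hev2 : ∀ᶠ s in nhdsWithin c (Set.Ioc c t),
        ‖ψ s 1 - ψ c 1‖ < δ ∧ s ∈ Set.Ioc c t :=
      (hev.filter_mono (nhdsWithin_mono c hsub)).and self_mem_nhdsWithin
    obtain ⟨s, hsnear, hsmem⟩ := hev2.exists
    have hs0 : 0 ≤ s := le_trans hc0 hsmem.1.le
    have hherm : (ψ s 1).IsHermitian := (hmaps s hs0 1 Matrix.PosSemidef.one).1
    have hsPD : (ψ s 1).PosDef := hnear _ hherm hsnear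
    have hsA : s ∈ A := ⟨⟨hs0, hsmem.2⟩, hsPD⟩
    exact absurd (le_csSup hbdd hsA) (not_le.mpr hsmem.1)
end

section
/- Under the admissible parameter assumptions, there exists a constant K ≥ 0 such that ⟨u, R(u)⟩ ≤ (K/2)(‖u‖² + 1) for all u ∈ S_d^+, where R(u) = −2uαu + B^⊤(u) + γ − ∫_{S_d^+\{0}} (e^{−⟨u,ξ⟩} − 1 + ⟨χ(ξ),u⟩)/(‖ξ‖² ∧ 1) μ(dξ). -/
open MeasureTheory

attribute [local instance] Matrix.normedAddCommGroup Matrix.normedSpace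

/-- The norm `‖x‖ = √tr(x xᵀ)` induced by the trace inner product `⟨x,y⟩ = tr(xy)`. -/
noncomputable def matNorm {d : ℕ} (x : Matrix (Fin d) (Fin d) ℝ) : ℝ :=
  Real.sqrt (x * x.transpose).trace

/-- The truncation function `χ(ξ) = ξ·1_{‖ξ‖ ≤ 1}`. -/
noncomputable def trunc {d : ℕ} (ξ : Matrix (Fin d) (Fin d) ℝ) :
    Matrix (Fin d) (Fin d) ℝ :=
  if matNorm ξ ≤ 1 then ξ else 0

/-- Integral of `f` against a finite signed measure, via the Jordan decomposition. -/
noncomputable def sIntegral {X : Type*} [MeasurableSpace X]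
    (s : SignedMeasure X) (f : X → ℝ) : ℝ :=
  ∫ x, f x ∂s.toJordanDecomposition.posPart -
    ∫ x, f x ∂s.toJordanDecomposition.negPart

/-- The kernel `M(x,dξ) = ⟨x, μ(dξ)⟩/(‖ξ‖² ∧ 1)`: the signed measure
`⟨x, μ(dξ)⟩ = ∑_{ij} x_{ij} μ_{ij}(dξ)` is nonnegative for positive semidefinite `x`
(so it coincides with the positive part of its Jordan decomposition), divided by the
density `‖ξ‖² ∧ 1`. -/
noncomputable def Mker {d : ℕ}
    (μ : Fin d → Fin d → SignedMeasure (Matrix (Fin d) (Fin d) ℝ))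
    (x : Matrix (Fin d) (Fin d) ℝ) : Measure (Matrix (Fin d) (Fin d) ℝ) :=
  ((∑ i : Fin d, ∑ j : Fin d, x i j • μ i j).toJordanDecomposition.posPart).withDensity
    fun ξ => ENNReal.ofReal (1 / min (matNorm ξ ^ 2) 1)

/-- The function `R` of the generalized Riccati equation:
`R(u) = −2uαu + B^⊤(u) + γ − ∫_{S_d^+∖{0}} (e^{−⟨u,ξ⟩} − 1 + ⟨χ(ξ),u⟩)/(‖ξ‖² ∧ 1) μ(dξ)`,
the integral being taken entrywise against the finite signed measures `μ_{ij}`. -/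
noncomputable def Rmat {d : ℕ} (α γ : Matrix (Fin d) (Fin d) ℝ)
    (Bt : Matrix (Fin d) (Fin d) ℝ →ₗ[ℝ] Matrix (Fin d) (Fin d) ℝ)
    (μ : Fin d → Fin d → SignedMeasure (Matrix (Fin d) (Fin d) ℝ))
    (u : Matrix (Fin d) (Fin d) ℝ) : Matrix (Fin d) (Fin d) ℝ :=
  (-2 : ℝ) • (u * α * u) + Bt u + γ -
    Matrix.of fun i j => sIntegral (μ i j) fun ξ =>
      (Real.exp (-(u * ξ).trace) - 1 + ((trunc ξ) * u).trace) / min (matNorm ξ ^ 2) 1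

section Aux

variable {d : ℕ}

local notation "Mat" => Matrix (Fin d) (Fin d) ℝ

lemma trace_mul_eq (A B : Mat) : (A * B).trace = ∑ i, ∑ j, A i j * B j i := by
  simp [Matrix.trace, Matrix.mul_apply, Matrix.diag]

lemma matNorm_eq (x : Mat) : matNorm x = Real.sqrt (∑ i, ∑ j, x i j ^ 2) := by
  simp [matNorm, trace_mul_eq, Matrix.transpose_apply, sq]

lemma matNorm_nonneg (x : Mat) : 0 ≤ matNorm x := Real.sqrt_nonneg _

lemma abs_entry_le_matNorm (x : Mat) (i j : Fin d) : |x i j| ≤ matNorm x := by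
  rw [matNorm_eq, ← Real.sqrt_sq_eq_abs]
  apply Real.sqrt_le_sqrt
  calc x i j ^ 2
      ≤ ∑ j', x i j' ^ 2 :=
        Finset.single_le_sum (f := fun j' => x i j' ^ 2)
          (fun _ _ => sq_nonneg _) (Finset.mem_univ j)
    _ ≤ ∑ i', ∑ j', x i' j' ^ 2 :=
        Finset.single_le_sum (f := fun i' => ∑ j', x i' j' ^ 2)
          (fun _ _ => Finset.sum_nonneg fun _ _ => sq_nonneg _) (Finset.mem_univ i)

lemma matNorm_pos {x : Mat} (hx : x ≠ 0) : 0 < matNorm x := by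
  have : ∃ i j, x i j ≠ 0 := by
    by_contra h
    push_neg at h
    exact hx (by ext i j; simpa using h i j)
  obtain ⟨i, j, hij⟩ := this
  exact lt_of_lt_of_le (abs_pos.mpr hij) (abs_entry_le_matNorm x i j)

lemma trace_conjTranspose_mul_self_nonneg (M : Mat) : 0 ≤ (M.conjTranspose * M).trace := by
  rw [trace_mul_eq]
  refine Finset.sum_nonneg fun i _ => Finset.sum_nonneg fun j _ => ?_
  simp only [Matrix.conjTranspose_apply, star_trivial]
  exact mul_self_nonneg _

open scoped MatrixOrder in
lemma psd_eq_ct_mul_self {A : Mat} (hA : A.PosSemidef) : ∃ C : Mat, A = C.conjTranspose * C := by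
  have h0 : 0 ≤ A := hA.nonneg
  refine ⟨CFC.sqrt A, ?_⟩
  have hs : IsSelfAdjoint (CFC.sqrt A) := (CFC.sqrt_nonneg A).isSelfAdjoint
  have : (CFC.sqrt A).conjTranspose = CFC.sqrt A := hs
  rw [this, CFC.sqrt_mul_sqrt_self A h0]

lemma trace_mul_nonneg_of_posSemidef {A B : Mat} (hA : A.PosSemidef) (hB : B.PosSemidef) :
    0 ≤ (A * B).trace := by
  obtain ⟨C, rfl⟩ := psd_eq_ct_mul_self hA
  obtain ⟨D, rfl⟩ := psd_eq_ct_mul_self hB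
  have h1 : (C.conjTranspose * C * (D.conjTranspose * D)).trace
      = ((C * D.conjTranspose).conjTranspose * (C * D.conjTranspose)).trace := by
    rw [Matrix.conjTranspose_mul, Matrix.conjTranspose_conjTranspose]
    rw [Matrix.mul_assoc C.conjTranspose C (D.conjTranspose * D), Matrix.trace_mul_comm,
      Matrix.trace_mul_comm (D * C.conjTranspose)]
    congr 1
    simp only [Matrix.mul_assoc]
  rw [h1]
  exact trace_conjTranspose_mul_self_nonneg _

lemma exp_quad_bound {t : ℝ} (ht : 0 ≤ t) : Real.exp (-t) - 1 + t ≤ t ^ 2 := by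
  have h1 : t + 1 ≤ Real.exp t := Real.add_one_le_exp t
  have hpos : (0 : ℝ) < t + 1 := by linarith
  have h2 : Real.exp (-t) ≤ (t + 1)⁻¹ := by
    rw [Real.exp_neg]
    exact inv_anti₀ hpos h1
  have h3 : (t + 1)⁻¹ ≤ 1 - t + t ^ 2 := by
    rw [inv_eq_one_div, div_le_iff₀ hpos]
    nlinarith [pow_nonneg ht 3]
  linarith

end Aux

section Aux2

variable {d : ℕ}

local notation "Mat" => Matrix (Fin d) (Fin d) ℝ

lemma continuous_matNorm : Continuous (matNorm (d := d)) := by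
  have h0 : Continuous fun x : Mat => ∑ i, ∑ j, x i j ^ 2 :=
    continuous_finset_sum _ fun i _ => continuous_finset_sum _ fun j _ =>
      ((continuous_id.matrix_elem i j).pow 2)
  have h := Real.continuous_sqrt.comp h0
  convert h using 1
  funext x
  rw [matNorm_eq]
  rfl

lemma measurableSet_psdSet :
    MeasurableSet {ξ : Mat | ξ.PosSemidef ∧ ξ ≠ 0} := by
  have h1 : IsClosed {ξ : Mat | ξ.PosSemidef} := by
    have hset : {ξ : Mat | ξ.PosSemidef} =
        {ξ : Mat | ξ.conjTranspose = ξ} ∩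
          ⋂ v : Fin d → ℝ, {ξ : Mat | 0 ≤ dotProduct (star v) (ξ.mulVec v)} := by
      ext ξ
      simp only [Set.mem_inter_iff, Set.mem_iInter, Set.mem_setOf_eq]
      exact ⟨fun h => ⟨h.1, h.dotProduct_mulVec_nonneg⟩, fun h => Matrix.PosSemidef.of_dotProduct_mulVec_nonneg h.1 h.2⟩
    rw [hset]
    refine (isClosed_eq (continuous_id.matrix_conjTranspose) continuous_id).inter
      (isClosed_iInter fun v => isClosed_le continuous_const ?_)
    have : (fun ξ : Mat => dotProduct (star v) (ξ.mulVec v))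
        = fun ξ : Mat => ∑ i, star v i * ∑ j, ξ i j * v j := by
      funext ξ
      simp [dotProduct, Matrix.mulVec]
    rw [this]
    exact continuous_finset_sum _ fun i _ => continuous_const.mul
      (continuous_finset_sum _ fun j _ => (continuous_id.matrix_elem i j).mul continuous_const)
  have h2 : MeasurableSet {ξ : Mat | ξ ≠ 0} := by
    have : {ξ : Mat | ξ ≠ 0} = ({0} : Set Mat)ᶜ := by
      ext ξ; simp
    rw [this]
    exact (isClosed_singleton.measurableSet).compl
  exact (h1.measurableSet).inter h2

end Aux2

section Aux3

variable {X : Type*} [MeasurableSpace X]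

lemma jd_apply (s : SignedMeasure X) {E : Set X} (hE : MeasurableSet E) :
    s E = (s.toJordanDecomposition.posPart E).toReal -
      (s.toJordanDecomposition.negPart E).toReal := by
  conv_lhs => rw [← s.toSignedMeasure_toJordanDecomposition]
  rw [JordanDecomposition.toSignedMeasure, Measure.toSignedMeasure_sub_apply hE]
  rfl

lemma parts_null (s : SignedMeasure X) {E : Set X} (hE : MeasurableSet E)
    (h : ∀ F, MeasurableSet F → F ⊆ E → s F = 0) :
    s.toJordanDecomposition.posPart E = 0 ∧ s.toJordanDecomposition.negPart E = 0 := by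
  obtain ⟨i, hi₁, hi₂, hi₃, hp, hn⟩ := s.toJordanDecomposition_spec
  constructor
  · rw [hp, SignedMeasure.toMeasureOfZeroLE_apply _ hi₂ hi₁ hE]
    have h0 : s (i ∩ E) = 0 := h _ (hi₁.inter hE) Set.inter_subset_right
    simp [h0]
  · rw [hn, SignedMeasure.toMeasureOfLEZero_apply _ hi₃ hi₁.compl hE]
    have h0 : s (iᶜ ∩ E) = 0 := h _ (hi₁.compl.inter hE) Set.inter_subset_right
    simp [h0]

lemma sIntegral_zero (f : X → ℝ) : sIntegral (0 : SignedMeasure X) f = 0 := by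
  simp [sIntegral, SignedMeasure.toJordanDecomposition_zero]

lemma sIntegral_smul (c : ℝ) (s : SignedMeasure X) (f : X → ℝ) :
    sIntegral (c • s) f = c * sIntegral s f := by
  rcases le_or_gt 0 c with hc | hc
  · rw [sIntegral, sIntegral, SignedMeasure.toJordanDecomposition_smul_real,
      JordanDecomposition.real_smul_posPart_nonneg _ _ hc,
      JordanDecomposition.real_smul_negPart_nonneg _ _ hc,
      integral_smul_nnreal_measure, integral_smul_nnreal_measure]
    simp only [NNReal.smul_def, Real.coe_toNNReal _ hc, smul_eq_mul]
    ring
  · rw [sIntegral, sIntegral, SignedMeasure.toJordanDecomposition_smul_real,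
      JordanDecomposition.real_smul_posPart_neg _ _ hc,
      JordanDecomposition.real_smul_negPart_neg _ _ hc,
      integral_smul_nnreal_measure, integral_smul_nnreal_measure]
    simp only [NNReal.smul_def, Real.coe_toNNReal _ (by linarith : (0:ℝ) ≤ -c), smul_eq_mul]
    ring

lemma sIntegral_add (s t : SignedMeasure X) (f : X → ℝ)
    (hsp : Integrable f s.toJordanDecomposition.posPart)
    (hsn : Integrable f s.toJordanDecomposition.negPart)
    (htp : Integrable f t.toJordanDecomposition.posPart)
    (htn : Integrable f t.toJordanDecomposition.negPart)
    (hstp : Integrable f (s + t).toJordanDecomposition.posPart)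
    (hstn : Integrable f (s + t).toJordanDecomposition.negPart) :
    sIntegral (s + t) f = sIntegral s f + sIntegral t f := by
  have key : s.toJordanDecomposition.posPart + t.toJordanDecomposition.posPart +
      (s + t).toJordanDecomposition.negPart
      = (s + t).toJordanDecomposition.posPart + s.toJordanDecomposition.negPart +
        t.toJordanDecomposition.negPart := by
    ext E hE
    have Hs := jd_apply s hE
    have Ht := jd_apply t hE
    have Hst := jd_apply (s + t) hE
    have hadd : (s + t) E = s E + t E := VectorMeasure.add_apply s t E
    simp only [Measure.coe_add, Pi.add_apply]
    rw [← ENNReal.toReal_eq_toReal_iff' (by finiteness) (by finiteness)]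
    rw [ENNReal.toReal_add (by finiteness) (by finiteness),
        ENNReal.toReal_add (by finiteness) (by finiteness),
        ENNReal.toReal_add (by finiteness) (by finiteness),
        ENNReal.toReal_add (by finiteness) (by finiteness)]
    linarith
  have hInt : ∫ x, f x ∂(s.toJordanDecomposition.posPart + t.toJordanDecomposition.posPart +
      (s + t).toJordanDecomposition.negPart)
      = ∫ x, f x ∂((s + t).toJordanDecomposition.posPart + s.toJordanDecomposition.negPart +
        t.toJordanDecomposition.negPart) := by rw [key]
  rw [integral_add_measure (hsp.add_measure htp) hstn,
      integral_add_measure hsp htp,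
      integral_add_measure (hstp.add_measure hsn) htn,
      integral_add_measure hstp hsn] at hInt
  simp only [sIntegral]
  linarith

end Aux3

section Aux4

variable {X : Type*} [MeasurableSpace X]

lemma vm_sum_apply {ι : Type*} (F : Finset ι) (g : ι → SignedMeasure X) (E : Set X) :
    (∑ k ∈ F, g k) E = ∑ k ∈ F, g k E := by
  classical
  induction F using Finset.induction_on with
  | empty => simp
  | @insert a F ha ih =>
    rw [Finset.sum_insert ha, Finset.sum_insert ha, VectorMeasure.add_apply, ih]

lemma sIntegral_finset_sum {ι : Type*} (T : Set X) (f : X → ℝ)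
    (hf : ∀ s : SignedMeasure X, (∀ G, MeasurableSet G → G ⊆ T → s G = 0) →
      Integrable f s.toJordanDecomposition.posPart ∧
        Integrable f s.toJordanDecomposition.negPart)
    (F : Finset ι) (g : ι → SignedMeasure X)
    (hg : ∀ k, ∀ G, MeasurableSet G → G ⊆ T → g k G = 0) :
    (∀ G, MeasurableSet G → G ⊆ T → (∑ k ∈ F, g k) G = 0) ∧
      sIntegral (∑ k ∈ F, g k) f = ∑ k ∈ F, sIntegral (g k) f := by
  classical
  induction F using Finset.induction_on with
  | empty => exact ⟨by simp, by simpa using sIntegral_zero f⟩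
  | @insert a F ha ih =>
    obtain ⟨ihGood, ihEq⟩ := ih
    have hGoodsum : ∀ G, MeasurableSet G → G ⊆ T → (g a + ∑ k ∈ F, g k) G = 0 := by
      intro G hG hsub
      rw [VectorMeasure.add_apply, hg a G hG hsub, ihGood G hG hsub, add_zero]
    have h1 := hf _ (hg a)
    have h2 := hf _ ihGood
    have h3 := hf _ hGoodsum
    rw [Finset.sum_insert ha, Finset.sum_insert ha]
    exact ⟨hGoodsum, by rw [sIntegral_add _ _ f h1.1 h1.2 h2.1 h2.2 h3.1 h3.2, ihEq]⟩

end Aux4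

/-- Under the admissible parameter assumptions (diffusion `α ⪰ 0`,
linear drift `B` with adjoint `B^⊤`, killing `γ ⪰ 0`, and a symmetric matrix
`μ = (μ_{ij})` of finite signed measures supported on `S_d^+∖{0}` whose set values
are positive semidefinite matrices, satisfying the integrability and inward-pointing
drift conditions), there exists a constant `K ≥ 0` such that
`⟨u, R(u)⟩ ≤ (K/2)(‖u‖² + 1)` for all `u ∈ S_d^+`, where `‖·‖` is the norm induced
by the trace inner product. -/
theorem Riccati_R_linear_growth_bound {d : ℕ}
    (α γ : Matrix (Fin d) (Fin d) ℝ)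
    (B Bt : Matrix (Fin d) (Fin d) ℝ →ₗ[ℝ] Matrix (Fin d) (Fin d) ℝ)
    (μ : Fin d → Fin d → SignedMeasure (Matrix (Fin d) (Fin d) ℝ))
    (hα : α.PosSemidef) (hγ : γ.PosSemidef)
    (hBsymm : ∀ x : Matrix (Fin d) (Fin d) ℝ, x.IsSymm → (B x).IsSymm)
    (hBtsymm : ∀ u : Matrix (Fin d) (Fin d) ℝ, u.IsSymm → (Bt u).IsSymm)
    (hadj : ∀ x u : Matrix (Fin d) (Fin d) ℝ, x.IsSymm → u.IsSymm →
      ((B x) * u).trace = (x * (Bt u)).trace)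
    (hμsymm : ∀ i j : Fin d, μ i j = μ j i)
    (hμsupp : ∀ (i j : Fin d) (E : Set (Matrix (Fin d) (Fin d) ℝ)), MeasurableSet E →
      E ⊆ {ξ : Matrix (Fin d) (Fin d) ℝ | ¬ (ξ.PosSemidef ∧ ξ ≠ 0)} → μ i j E = 0)
    (hμpsd : ∀ E : Set (Matrix (Fin d) (Fin d) ℝ), MeasurableSet E →
      Matrix.PosSemidef (Matrix.of fun i j => μ i j E))
    (hμint : ∀ x u : Matrix (Fin d) (Fin d) ℝ, x.PosSemidef → u.PosSemidef →
      (x * u).trace = 0 →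
      ∫⁻ ξ, ENNReal.ofReal (((trunc ξ) * u).trace) ∂(Mker μ x) ≠ ⊤)
    (hdrift : ∀ x u : Matrix (Fin d) (Fin d) ℝ, x.PosSemidef → u.PosSemidef →
      (x * u).trace = 0 →
      0 ≤ ((B x) * u).trace - ∫ ξ, ((trunc ξ) * u).trace ∂(Mker μ x)) :
    ∃ K : ℝ, 0 ≤ K ∧ ∀ u : Matrix (Fin d) (Fin d) ℝ, u.PosSemidef →
      (u * Rmat α γ Bt μ u).trace ≤ K / 2 * (matNorm u ^ 2 + 1) := by
  classical
  set S : Set (Matrix (Fin d) (Fin d) ℝ) := {ξ | ξ.PosSemidef ∧ ξ ≠ 0} with hS_def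
  have hS : MeasurableSet S := measurableSet_psdSet
  set CB : ℝ := ∑ i, ∑ j, ∑ k, ∑ l, |(Bt (Matrix.single k l (1:ℝ))) j i| with hCB_def
  set Cγ : ℝ := ∑ i, ∑ j, |γ j i| with hCγ_def
  set Cμ : ℝ := ∑ i : Fin d, ∑ j : Fin d, |μ i j Set.univ| with hCμ_def
  have hCB : 0 ≤ CB := Finset.sum_nonneg fun _ _ => Finset.sum_nonneg fun _ _ =>
    Finset.sum_nonneg fun _ _ => Finset.sum_nonneg fun _ _ => abs_nonneg _
  have hCγ : 0 ≤ Cγ := Finset.sum_nonneg fun _ _ => Finset.sum_nonneg fun _ _ => abs_nonneg _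
  have hCμ : 0 ≤ Cμ := Finset.sum_nonneg fun _ _ => Finset.sum_nonneg fun _ _ => abs_nonneg _
  refine ⟨2 * CB + Cγ + Cμ, by linarith, ?_⟩
  intro u hu
  set f : Matrix (Fin d) (Fin d) ℝ → ℝ := fun ξ =>
    (Real.exp (-(u * ξ).trace) - 1 + ((trunc ξ) * u).trace) / min (matNorm ξ ^ 2) 1
    with hf_def
  -- expansion of the trace
  have expand : (u * Rmat α γ Bt μ u).trace
      = (-2) * (u * (u * α * u)).trace + (u * Bt u).trace + (u * γ).trace
        - (u * Matrix.of (fun i j => sIntegral (μ i j) f)).trace := by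
    rw [Rmat, hf_def]
    rw [Matrix.mul_sub, Matrix.mul_add, Matrix.mul_add, Matrix.mul_smul]
    rw [Matrix.trace_sub, Matrix.trace_add, Matrix.trace_add, Matrix.trace_smul]
    simp [smul_eq_mul]
  -- diffusion term
  have tα : (-2) * (u * (u * α * u)).trace ≤ 0 := by
    have hps : (u * α * u).PosSemidef := by
      have h := hα.mul_mul_conjTranspose_same u
      rwa [hu.isHermitian.eq] at h
    have := trace_mul_nonneg_of_posSemidef hu hps
    linarith
  -- linear term
  have hentry : ∀ (v : Matrix (Fin d) (Fin d) ℝ) (j i : Fin d),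
      |(Bt v) j i| ≤ matNorm v * ∑ k, ∑ l, |(Bt (Matrix.single k l (1:ℝ))) j i| := by
    intro v j i
    have hv : Bt v = ∑ k, ∑ l, v k l • Bt (Matrix.single k l (1:ℝ)) := by
      conv_lhs => rw [Matrix.matrix_eq_sum_single v]
      rw [map_sum]
      refine Finset.sum_congr rfl fun k _ => ?_
      rw [map_sum]
      refine Finset.sum_congr rfl fun l _ => ?_
      rw [← LinearMap.map_smul]
      congr 1
      rw [Matrix.smul_single]
      simp
    calc |(Bt v) j i|
        = |∑ k, ∑ l, v k l * (Bt (Matrix.single k l (1:ℝ))) j i| := by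
          rw [hv]
          simp [Matrix.sum_apply]
      _ ≤ ∑ k, ∑ l, |v k l * (Bt (Matrix.single k l (1:ℝ))) j i| := by
          refine (Finset.abs_sum_le_sum_abs _ _).trans ?_
          exact Finset.sum_le_sum fun k _ => Finset.abs_sum_le_sum_abs _ _
      _ ≤ ∑ k, ∑ l, matNorm v * |(Bt (Matrix.single k l (1:ℝ))) j i| := by
          refine Finset.sum_le_sum fun k _ => Finset.sum_le_sum fun l _ => ?_
          rw [abs_mul]
          exact mul_le_mul_of_nonneg_right (abs_entry_le_matNorm v k l) (abs_nonneg _)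
      _ = matNorm v * ∑ k, ∑ l, |(Bt (Matrix.single k l (1:ℝ))) j i| := by
          rw [Finset.mul_sum]
          exact Finset.sum_congr rfl fun k _ => (Finset.mul_sum _ _ _).symm
  have tB : (u * Bt u).trace ≤ CB * matNorm u ^ 2 := by
    calc (u * Bt u).trace = ∑ i, ∑ j, u i j * (Bt u) j i := trace_mul_eq _ _
      _ ≤ ∑ i, ∑ j, |u i j * (Bt u) j i| := by
          refine Finset.sum_le_sum fun i _ => Finset.sum_le_sum fun j _ => le_abs_self _
      _ ≤ ∑ i, ∑ j, matNorm u *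
            (matNorm u * ∑ k, ∑ l, |(Bt (Matrix.single k l (1:ℝ))) j i|) := by
          refine Finset.sum_le_sum fun i _ => Finset.sum_le_sum fun j _ => ?_
          rw [abs_mul]
          exact mul_le_mul (abs_entry_le_matNorm u i j) (hentry u j i) (abs_nonneg _)
            (matNorm_nonneg u)
      _ = CB * matNorm u ^ 2 := by
          rw [hCB_def, Finset.sum_mul]
          refine Finset.sum_congr rfl fun i _ => ?_
          rw [Finset.sum_mul]
          refine Finset.sum_congr rfl fun j _ => ?_
          ring
  -- killing term
  have tγ : (u * γ).trace ≤ Cγ * matNorm u := by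
    calc (u * γ).trace = ∑ i, ∑ j, u i j * γ j i := trace_mul_eq _ _
      _ ≤ ∑ i, ∑ j, |u i j * γ j i| := by
          refine Finset.sum_le_sum fun i _ => Finset.sum_le_sum fun j _ => le_abs_self _
      _ ≤ ∑ i, ∑ j, |γ j i| * matNorm u := by
          refine Finset.sum_le_sum fun i _ => Finset.sum_le_sum fun j _ => ?_
          rw [abs_mul, mul_comm]
          exact mul_le_mul_of_nonneg_left (abs_entry_le_matNorm u i j) (abs_nonneg _)
      _ = Cγ * matNorm u := by
          rw [hCγ_def, Finset.sum_mul]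
          exact Finset.sum_congr rfl fun i _ => (Finset.sum_mul _ _ _).symm
  -- measurability of the integrand
  have c1 : Continuous fun ξ : Matrix (Fin d) (Fin d) ℝ => (u * ξ).trace := by
    have : (fun ξ : Matrix (Fin d) (Fin d) ℝ => (u * ξ).trace)
        = fun ξ => ∑ i, ∑ j, u i j * ξ j i := funext fun ξ => trace_mul_eq u ξ
    rw [this]
    exact continuous_finset_sum _ fun i _ => continuous_finset_sum _ fun j _ =>
      continuous_const.mul (continuous_id.matrix_elem j i)
  have c2 : Continuous fun ξ : Matrix (Fin d) (Fin d) ℝ => (ξ * u).trace := by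
    have : (fun ξ : Matrix (Fin d) (Fin d) ℝ => (ξ * u).trace)
        = fun ξ => ∑ i, ∑ j, ξ i j * u j i := funext fun ξ => trace_mul_eq ξ u
    rw [this]
    exact continuous_finset_sum _ fun i _ => continuous_finset_sum _ fun j _ =>
      (continuous_id.matrix_elem i j).mul continuous_const
  have hfmeas : Measurable f := by
    rw [hf_def]
    apply Measurable.div
    · apply Measurable.add
      · exact ((Real.continuous_exp.comp c1.neg).measurable).sub measurable_const
      · have : (fun ξ : Matrix (Fin d) (Fin d) ℝ => ((trunc ξ) * u).trace)
            = fun ξ => if matNorm ξ ≤ 1 then (ξ * u).trace else 0 := by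
          funext ξ
          rw [trunc]
          split <;> simp
        rw [this]
        exact Measurable.ite (measurableSet_le continuous_matNorm.measurable measurable_const)
          c2.measurable measurable_const
    · exact ((continuous_matNorm.pow 2).min continuous_const).measurable
  -- pointwise bounds on S
  set Cu : ℝ := ∑ i, ∑ j, |u i j| with hCu_def
  set C : ℝ := max (Cu ^ 2) 1 with hC_def
  have hC1 : (1:ℝ) ≤ C := le_max_right _ _
  have htrace_le : ∀ ξ : Matrix (Fin d) (Fin d) ℝ, (u * ξ).trace ≤ Cu * matNorm ξ := by
    intro ξ
    calc (u * ξ).trace = ∑ i, ∑ j, u i j * ξ j i := trace_mul_eq _ _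
      _ ≤ ∑ i, ∑ j, |u i j| * matNorm ξ := by
          refine Finset.sum_le_sum fun i _ => Finset.sum_le_sum fun j _ => ?_
          calc u i j * ξ j i ≤ |u i j * ξ j i| := le_abs_self _
            _ = |u i j| * |ξ j i| := abs_mul _ _
            _ ≤ |u i j| * matNorm ξ :=
                mul_le_mul_of_nonneg_left (abs_entry_le_matNorm ξ j i) (abs_nonneg _)
      _ = Cu * matNorm ξ := by
          rw [hCu_def, Finset.sum_mul]
          exact Finset.sum_congr rfl fun i _ => (Finset.sum_mul _ _ _).symm
  have hbound : ∀ ξ ∈ S, -1 ≤ f ξ ∧ f ξ ≤ C := by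
    intro ξ hξ
    obtain ⟨hpsd, hne⟩ := hξ
    have ht0 : 0 ≤ (u * ξ).trace := trace_mul_nonneg_of_posSemidef hu hpsd
    have hmn : 0 < matNorm ξ := matNorm_pos hne
    rcases le_or_gt (matNorm ξ) 1 with hle | hgt
    · have hden : min (matNorm ξ ^ 2) 1 = matNorm ξ ^ 2 := min_eq_left (by nlinarith)
      have htr : ((trunc ξ) * u).trace = (u * ξ).trace := by
        rw [trunc, if_pos hle, Matrix.trace_mul_comm]
      have hnum0 : 0 ≤ Real.exp (-(u * ξ).trace) - 1 + ((trunc ξ) * u).trace := by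
        have := Real.add_one_le_exp (-(u * ξ).trace)
        rw [htr]
        linarith
      have hnum1 : Real.exp (-(u * ξ).trace) - 1 + ((trunc ξ) * u).trace
          ≤ (u * ξ).trace ^ 2 := by
        rw [htr]
        exact exp_quad_bound ht0
      constructor
      · have h0 : 0 ≤ f ξ := by
          simp only [hf_def]
          rw [hden]
          exact div_nonneg hnum0 (by positivity)
        linarith
      · simp only [hf_def]
        rw [hden, div_le_iff₀ (by positivity)]
        calc Real.exp (-(u * ξ).trace) - 1 + ((trunc ξ) * u).trace
            ≤ (u * ξ).trace ^ 2 := hnum1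
          _ ≤ (Cu * matNorm ξ) ^ 2 := pow_le_pow_left₀ ht0 (htrace_le ξ) 2
          _ = Cu ^ 2 * matNorm ξ ^ 2 := by ring
          _ ≤ C * matNorm ξ ^ 2 := by
              have := le_max_left (Cu ^ 2) 1
              nlinarith [sq_nonneg (matNorm ξ)]
    · have hden : min (matNorm ξ ^ 2) 1 = 1 := min_eq_right (by nlinarith)
      have htr : ((trunc ξ) * u).trace = 0 := by
        rw [trunc, if_neg (not_le.mpr hgt)]
        simp
      have he1 : Real.exp (-(u * ξ).trace) ≤ 1 := by
        have := Real.exp_le_exp.mpr (neg_nonpos.mpr ht0)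
        rwa [Real.exp_zero] at this
      have he0 : 0 < Real.exp (-(u * ξ).trace) := Real.exp_pos _
      constructor
      · simp only [hf_def]
        rw [hden, htr, div_one]
        linarith
      · simp only [hf_def]
        rw [hden, htr, div_one]
        linarith
  -- integrability against measures concentrated on S
  have hGoodInt : ∀ s : SignedMeasure (Matrix (Fin d) (Fin d) ℝ),
      (∀ G, MeasurableSet G → G ⊆ Sᶜ → s G = 0) →
      Integrable f s.toJordanDecomposition.posPart ∧
        Integrable f s.toJordanDecomposition.negPart := by
    intro s hs
    obtain ⟨hp0, hn0⟩ := parts_null s hS.compl hs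
    have main : ∀ (m : Measure (Matrix (Fin d) (Fin d) ℝ)) [IsFiniteMeasure m],
        m Sᶜ = 0 → Integrable f m := by
      intro m _ hm0
      refine Integrable.mono' (integrable_const C) hfmeas.aestronglyMeasurable ?_
      refine ae_iff.mpr (measure_mono_null ?_ hm0)
      intro ξ hξ
      simp only [Set.mem_setOf_eq] at hξ
      by_contra hmem
      have hmemS : ξ ∈ S := by
        simpa using hmem
      obtain ⟨hb1, hb2⟩ := hbound ξ hmemS
      apply hξ
      rw [Real.norm_eq_abs]
      exact abs_le.mpr ⟨by linarith, hb2⟩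
    exact ⟨main _ hp0, main _ hn0⟩
  have hGoodμ : ∀ (k : Fin d × Fin d), ∀ G, MeasurableSet G → G ⊆ Sᶜ →
      (u k.1 k.2 • μ k.1 k.2) G = 0 := by
    intro k G hG hsub
    rw [VectorMeasure.smul_apply, hμsupp k.1 k.2 G hG hsub, smul_zero]
  set ν : SignedMeasure (Matrix (Fin d) (Fin d) ℝ) :=
    ∑ k : Fin d × Fin d, u k.1 k.2 • μ k.1 k.2 with hν_def
  obtain ⟨hνGood, hνEq⟩ :=
    sIntegral_finset_sum Sᶜ f hGoodInt Finset.univ (fun k : Fin d × Fin d => u k.1 k.2 • μ k.1 k.2) hGoodμ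
  -- nonnegativity of ν
  have hν_nonneg : ∀ E : Set (Matrix (Fin d) (Fin d) ℝ), MeasurableSet E → 0 ≤ ν E := by
    intro E hE
    rw [hν_def, vm_sum_apply]
    simp only [VectorMeasure.smul_apply, smul_eq_mul]
    have hid : ∑ k : Fin d × Fin d, u k.1 k.2 * (μ k.1 k.2) E
        = (u * Matrix.of (fun i j => μ i j E)).trace := by
      rw [trace_mul_eq, Fintype.sum_prod_type]
      refine Finset.sum_congr rfl fun i _ => Finset.sum_congr rfl fun j _ => ?_
      rw [Matrix.of_apply, hμsymm i j]
    rw [hid]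
    exact trace_mul_nonneg_of_posSemidef hu (hμpsd E hE)
  -- mass bound for ν
  have hν_univ : ν Set.univ ≤ matNorm u * Cμ := by
    rw [hν_def, vm_sum_apply]
    simp only [VectorMeasure.smul_apply, smul_eq_mul]
    rw [Fintype.sum_prod_type]
    calc ∑ i, ∑ j, u i j * (μ i j) Set.univ
        ≤ ∑ i : Fin d, ∑ j : Fin d, matNorm u * |(μ i j) Set.univ| := by
          refine Finset.sum_le_sum fun i _ => Finset.sum_le_sum fun j _ => ?_
          calc u i j * (μ i j) Set.univ ≤ |u i j * (μ i j) Set.univ| := le_abs_self _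
            _ = |u i j| * |(μ i j) Set.univ| := abs_mul _ _
            _ ≤ matNorm u * |(μ i j) Set.univ| :=
                mul_le_mul_of_nonneg_right (abs_entry_le_matNorm u i j) (abs_nonneg _)
      _ = matNorm u * Cμ := by
          rw [hCμ_def, Finset.mul_sum]
          exact Finset.sum_congr rfl fun i _ => (Finset.mul_sum _ _ _).symm
  obtain ⟨i0, hi₁, hi₂, hi₃, hp, hn⟩ := ν.toJordanDecomposition_spec
  have hnegzero : ν.toJordanDecomposition.negPart = 0 := by
    have huniv : ν.toJordanDecomposition.negPart Set.univ = 0 := by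
      rw [hn, SignedMeasure.toMeasureOfLEZero_apply _ hi₃ hi₁.compl MeasurableSet.univ]
      have hle : ν (i0ᶜ ∩ Set.univ) ≤ 0 :=
        VectorMeasure.nonpos_of_restrict_le_zero _
          (VectorMeasure.restrict_le_zero_subset _ hi₁.compl Set.inter_subset_left hi₃)
      have hge : 0 ≤ ν (i0ᶜ ∩ Set.univ) := hν_nonneg _ (hi₁.compl.inter MeasurableSet.univ)
      have h0 : ν (i0ᶜ ∩ Set.univ) = 0 := le_antisymm hle hge
      have h0' : ν i0ᶜ = 0 := by rwa [Set.inter_univ] at h0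
      simp [Set.inter_univ, h0']
    exact Measure.measure_univ_eq_zero.mp huniv
  have hposS : ν.toJordanDecomposition.posPart Sᶜ = 0 := (parts_null ν hS.compl hνGood).1
  have hpos_univ : (ν.toJordanDecomposition.posPart Set.univ).toReal ≤ matNorm u * Cμ := by
    rw [hp, SignedMeasure.toMeasureOfZeroLE_apply _ hi₂ hi₁ MeasurableSet.univ]
    rw [ENNReal.coe_toReal, NNReal.coe_mk]
    have hsplit : ν Set.univ = ν i0 + ν i0ᶜ := by
      rw [← VectorMeasure.of_union disjoint_compl_right hi₁ hi₁.compl, Set.union_compl_self]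
    have h1 : 0 ≤ ν i0ᶜ := hν_nonneg _ hi₁.compl
    have h2 : ν (i0 ∩ Set.univ) = ν i0 := by rw [Set.inter_univ]
    rw [h2]
    linarith [hν_univ]
  have hIntν := hGoodInt ν hνGood
  have hlow : -(matNorm u * Cμ) ≤ sIntegral ν f := by
    rw [sIntegral]
    have hzero : ∫ x, f x ∂ν.toJordanDecomposition.negPart = 0 := by
      rw [hnegzero]
      exact integral_zero_measure f
    rw [hzero, sub_zero]
    have hae : ∀ᵐ ξ ∂ν.toJordanDecomposition.posPart, (fun _ => (-1:ℝ)) ξ ≤ f ξ := by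
      refine ae_iff.mpr (measure_mono_null ?_ hposS)
      intro ξ hξ
      simp only [Set.mem_setOf_eq, not_le] at hξ
      by_contra hmem
      have hmemS : ξ ∈ S := by simpa using hmem
      exact absurd hξ (not_lt.mpr (hbound ξ hmemS).1)
    have hmono := integral_mono_ae (integrable_const (-1 : ℝ)) hIntν.1 hae
    rw [integral_const] at hmono
    simp only [smul_eq_mul, mul_neg, mul_one] at hmono
    rw [measureReal_def] at hmono
    have := ENNReal.toReal_nonneg (a := ν.toJordanDecomposition.posPart Set.univ)
    linarith [hpos_univ]
  -- identify the trace of the integral matrix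
  have htrace_int : (u * Matrix.of (fun i j => sIntegral (μ i j) f)).trace = sIntegral ν f := by
    rw [hν_def, hνEq, trace_mul_eq, Fintype.sum_prod_type]
    refine Finset.sum_congr rfl fun i _ => Finset.sum_congr rfl fun j _ => ?_
    rw [Matrix.of_apply, sIntegral_smul, hμsymm i j]
  have tI : -(u * Matrix.of (fun i j => sIntegral (μ i j) f)).trace ≤ matNorm u * Cμ := by
    rw [htrace_int]
    linarith
  rw [expand]
  nlinarith [mul_nonneg hCγ (sq_nonneg (matNorm u - 1)),
    mul_nonneg hCμ (sq_nonneg (matNorm u - 1)), matNorm_nonneg u,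
    mul_nonneg hCB (sq_nonneg (matNorm u))]
end

section
/- Let g: S_d^+ → ℝ be additive, i.e., g(x + y) = g(x) + g(y) for all x,y ∈ S_d^+. Then g extends to an additive function on S_d. If moreover g is Borel measurable on S_d^+, then there exists c ∈ S_d such that g(x) = ⟨c,x⟩ for all x ∈ S_d^+. -/
open MeasureTheory Pointwise Matrix

section AuxLemmas

/-- A measurable additive function on `ℝ` is linear (Cauchy functional equation). -/
lemma cauchy_measurable_linear (F : ℝ → ℝ) (hF : ∀ s t : ℝ, F (s + t) = F s + F t)
    (hm : Measurable F) : ∀ t : ℝ, F t = t * F 1 := by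
  have F0 : F 0 = 0 := by have h := hF 0 0; rw [add_zero] at h; linarith
  have Fn : ∀ (n : ℕ) (t : ℝ), F ((n : ℝ) * t) = (n : ℝ) * F t := by
    intro n t
    induction n with
    | zero => simp [F0]
    | succ k ih => push_cast; rw [add_mul, one_mul, hF, ih]; ring
  -- find a set of positive measure on which F is bounded
  set A : ℕ → Set ℝ := fun n => F ⁻¹' Set.Icc (-(n : ℝ)) n with hA
  have hAm : ∀ n, MeasurableSet (A n) := fun n => hm measurableSet_Icc
  obtain ⟨n, hn⟩ : ∃ n : ℕ, 0 < volume (A n) := by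
    by_contra h
    push_neg at h
    have hz : ∀ n, volume (A n) = 0 := fun n => le_antisymm (h n) bot_le
    have hcov : (Set.univ : Set ℝ) ⊆ ⋃ n, A n := by
      intro t _
      refine Set.mem_iUnion.2 ⟨⌈|F t|⌉₊, ?_⟩
      have : |F t| ≤ (⌈|F t|⌉₊ : ℝ) := Nat.le_ceil _
      exact Set.mem_preimage.2 ⟨by cases abs_le.1 this; linarith, by cases abs_le.1 this; linarith⟩
    have : volume (Set.univ : Set ℝ) = 0 :=
      measure_mono_null hcov (measure_iUnion_null hz)
    simp [Real.volume_univ] at this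
  have hnhds : A n - A n ∈ nhds (0 : ℝ) :=
    MeasureTheory.Measure.sub_mem_nhds_zero_of_addHaar_pos volume (A n) (hAm n) hn
  have hbound : ∀ x ∈ A n - A n, |F x| ≤ 2 * n := by
    rintro x ⟨a, ha, b, hb, rfl⟩
    have hab : F (a - b) = F a - F b := by
      have h := hF (a - b) b; rw [sub_add_cancel] at h; linarith
    rw [hab]
    rw [hA, Set.mem_preimage, Set.mem_Icc] at ha hb
    rw [abs_le]; constructor <;> [linarith [ha.1, hb.2]; linarith [ha.2, hb.1]]
  -- continuity at 0
  have hcont0 : Filter.Tendsto F (nhds 0) (nhds 0) := by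
    rw [NormedAddCommGroup.tendsto_nhds_zero]
    intro ε hε
    set m : ℕ := ⌈(2 * n + 1) / ε⌉₊ + 1 with hmdef
    have hmpos : 0 < (m : ℝ) := by positivity
    have hmgt : 2 * (n : ℝ) < m * ε := by
      have h1 : (2 * (n : ℝ) + 1) / ε ≤ (⌈(2 * n + 1) / ε⌉₊ : ℝ) := Nat.le_ceil _
      have h2 : ((⌈(2 * (n : ℝ) + 1) / ε⌉₊ : ℝ) + 1) = (m : ℝ) := by push_cast [hmdef]; ring
      have := (div_le_iff₀ hε).1 h1
      nlinarith
    have hset : (fun x : ℝ => (m : ℝ) * x) ⁻¹' (A n - A n) ∈ nhds (0 : ℝ) := by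
      have hc : ContinuousAt (fun x : ℝ => (m : ℝ) * x) 0 :=
        (continuous_const.mul continuous_id).continuousAt
      apply hc.preimage_mem_nhds
      simpa using hnhds
    filter_upwards [hset] with x hx
    have h1 : |F ((m : ℝ) * x)| ≤ 2 * n := hbound _ hx
    rw [Fn m x, abs_mul, abs_of_pos hmpos] at h1
    have : |F x| < ε := by
      by_contra hcon
      push_neg at hcon
      nlinarith
    simpa [Real.norm_eq_abs] using this
  have hcont : Continuous F := by
    rw [continuous_iff_continuousAt]
    intro a
    have heq : ∀ x, F x = F (x - a) + F a := by
      intro x; have h := hF (x - a) a; rw [sub_add_cancel] at h; linarith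
    have key : Filter.Tendsto (fun x => F (x - a) + F a) (nhds a) (nhds (0 + F a)) := by
      refine Filter.Tendsto.add ?_ tendsto_const_nhds
      exact hcont0.comp (by
        have : Filter.Tendsto (fun x : ℝ => x - a) (nhds a) (nhds (a - a)) :=
          (continuous_id.sub continuous_const).continuousAt
        simpa using this)
    have : Filter.Tendsto F (nhds a) (nhds (0 + F a)) := by
      apply key.congr; intro x; exact (heq x).symm
    rw [zero_add] at this; exact this
  intro t
  have := (AddMonoidHom.mk' F hF).toRealLinearMap hcont |>.map_smul t (1 : ℝ)
  simp only [smul_eq_mul, mul_one] at this; exact this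

variable {d : ℕ}


lemma psd_smul_one {t : ℝ} (ht : 0 ≤ t) : (t • (1 : Matrix (Fin d) (Fin d) ℝ)).PosSemidef := by
  rw [posSemidef_iff_dotProduct_mulVec]; constructor
  · unfold Matrix.IsHermitian
    rw [conjTranspose_smul, conjTranspose_one]
    simp
  · intro v
    have : star v = v := by funext i; simp
    rw [this, smul_mulVec, one_mulVec, dotProduct_smul]
    have h2 : 0 ≤ v ⬝ᵥ v := by
      unfold dotProduct
      exact Finset.sum_nonneg fun i _ => mul_self_nonneg _
    simpa [smul_eq_mul] using mul_nonneg ht h2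

lemma psd_smul {a : Matrix (Fin d) (Fin d) ℝ} (ha : a.PosSemidef) {t : ℝ} (ht : 0 ≤ t) :
    (t • a).PosSemidef := by
  rw [posSemidef_iff_dotProduct_mulVec]; constructor
  · unfold Matrix.IsHermitian
    rw [conjTranspose_smul, ha.1]
    simp
  · intro v
    rw [smul_mulVec, dotProduct_smul]
    simpa [smul_eq_mul] using mul_nonneg ht (ha.dotProduct_mulVec_nonneg v)

lemma psd_shift {x : Matrix (Fin d) (Fin d) ℝ} (hx : x.IsSymm) :
    (x + (∑ i, ∑ j, |x i j|) • (1 : Matrix (Fin d) (Fin d) ℝ)).PosSemidef := by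
  set T : ℝ := ∑ i, ∑ j, |x i j| with hT
  rw [posSemidef_iff_dotProduct_mulVec]; constructor
  · unfold Matrix.IsHermitian
    rw [conjTranspose_add, conjTranspose_smul, conjTranspose_one]
    have hxh : xᴴ = x := by
      have : xᴴ = xᵀ := by ext i j; simp [conjTranspose_apply]
      rw [this, hx]
    rw [hxh]; simp
  · intro v
    have hsv : star v = v := by funext i; simp
    rw [hsv, add_mulVec, dotProduct_add, smul_mulVec, one_mulVec, dotProduct_smul]
    set S : ℝ := v ⬝ᵥ v with hS
    have hSnn : 0 ≤ S := Finset.sum_nonneg fun i _ => mul_self_nonneg _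
    have hvS : ∀ i, v i * v i ≤ S :=
      fun i => Finset.single_le_sum (f := fun k => v k * v k)
        (fun k _ => mul_self_nonneg _) (Finset.mem_univ i)
    have hterm : ∀ i j, -(|x i j| * S) ≤ v i * (x i j * v j) := by
      intro i j
      have h1 : |v i * v j| ≤ S := by
        rw [abs_mul]
        nlinarith [hvS i, hvS j, sq_nonneg (|v i| - |v j|), abs_nonneg (v i), abs_nonneg (v j),
          abs_mul_abs_self (v i), abs_mul_abs_self (v j)]
      have h2 : |x i j * (v i * v j)| ≤ |x i j| * S := by
        rw [abs_mul]
        exact mul_le_mul_of_nonneg_left h1 (abs_nonneg _)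
      have h3 := (abs_le.1 h2).1
      nlinarith [h3]
    have hquad : -(T * S) ≤ v ⬝ᵥ x *ᵥ v := by
      have hexp : v ⬝ᵥ x *ᵥ v = ∑ i, ∑ j, v i * (x i j * v j) := by
        unfold dotProduct Matrix.mulVec dotProduct
        exact Finset.sum_congr rfl fun i _ => Finset.mul_sum _ _ _
      rw [hexp, hT, Finset.sum_mul, neg_le, ← Finset.sum_neg_distrib]
      refine Finset.sum_le_sum fun i _ => ?_
      rw [Finset.sum_mul, neg_le, ← Finset.sum_neg_distrib]
      exact Finset.sum_le_sum fun j _ => by have := hterm i j; linarith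
    rw [smul_eq_mul]; linarith [hquad]

lemma key_diff (g : Matrix (Fin d) (Fin d) ℝ → ℝ)
    (hadd : ∀ x y : Matrix (Fin d) (Fin d) ℝ, x.PosSemidef → y.PosSemidef →
      g (x + y) = g x + g y)
    {p q p' q' : Matrix (Fin d) (Fin d) ℝ}
    (hp : p.PosSemidef) (hq : q.PosSemidef) (hp' : p'.PosSemidef) (hq' : q'.PosSemidef)
    (h : p + q' = p' + q) : g p - g q = g p' - g q' := by
  have h1 := hadd p q' hp hq'
  have h2 := hadd p' q hp' hq
  rw [h, h2] at h1
  linarith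

lemma psd_isSymm {x : Matrix (Fin d) (Fin d) ℝ} (hx : x.PosSemidef) : x.IsSymm := by
  have h := hx.1
  unfold Matrix.IsHermitian at h
  unfold Matrix.IsSymm
  conv_rhs => rw [← h]
  ext i j; simp [conjTranspose_apply]

end AuxLemmas

/-- Let `g : S_d^+ → ℝ` be additive, i.e. `g(x+y) = g(x) + g(y)` for
all positive semidefinite `x, y`.  Then `g` extends to an additive function on the
space `S_d` of symmetric matrices.  If moreover `g` is Borel measurable on `S_d^+`,
then there exists a symmetric matrix `c` with `g(x) = ⟨c,x⟩ = tr(cx)` for all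
positive semidefinite `x`. -/
theorem additive_on_cone_is_linear {d : ℕ} (g : Matrix (Fin d) (Fin d) ℝ → ℝ)
    (hadd : ∀ x y : Matrix (Fin d) (Fin d) ℝ, x.PosSemidef → y.PosSemidef →
      g (x + y) = g x + g y) :
    (∃ g' : Matrix (Fin d) (Fin d) ℝ → ℝ,
      (∀ x y : Matrix (Fin d) (Fin d) ℝ, x.IsSymm → y.IsSymm →
        g' (x + y) = g' x + g' y) ∧
      (∀ x : Matrix (Fin d) (Fin d) ℝ, x.PosSemidef → g' x = g x)) ∧
    ((∀ E : Set ℝ, MeasurableSet E →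
        MeasurableSet (g ⁻¹' E ∩ {x : Matrix (Fin d) (Fin d) ℝ | x.PosSemidef})) →
      ∃ c : Matrix (Fin d) (Fin d) ℝ, c.IsSymm ∧
        ∀ x : Matrix (Fin d) (Fin d) ℝ, x.PosSemidef → g x = (c * x).trace) := by
  set T : Matrix (Fin d) (Fin d) ℝ → ℝ := fun x => ∑ i, ∑ j, |x i j| with hTdef
  have hT0 : ∀ x, 0 ≤ T x :=
    fun x => Finset.sum_nonneg fun i _ => Finset.sum_nonneg fun j _ => abs_nonneg _
  set g' : Matrix (Fin d) (Fin d) ℝ → ℝ := fun x => g (x + T x • 1) - g (T x • 1) with hg'def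
  have hshift : ∀ x : Matrix (Fin d) (Fin d) ℝ, x.IsSymm → (x + T x • 1).PosSemidef :=
    fun x hx => psd_shift hx
  -- well-definedness
  have welldef : ∀ x : Matrix (Fin d) (Fin d) ℝ, x.IsSymm →
      ∀ p q : Matrix (Fin d) (Fin d) ℝ, p.PosSemidef → q.PosSemidef → x = p - q →
      g' x = g p - g q := by
    intro x hx p q hp hq hxpq
    refine key_diff g hadd (hshift x hx) (psd_smul_one (hT0 x)) hp hq ?_
    rw [hxpq]; abel
  have hgadd' : ∀ x y : Matrix (Fin d) (Fin d) ℝ, x.IsSymm → y.IsSymm →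
      g' (x + y) = g' x + g' y := by
    intro x y hx hy
    have h1 : g' (x + y) = g ((x + T x • 1) + (y + T y • 1)) - g (T x • 1 + T y • 1) := by
      refine welldef (x + y) (hx.add hy) _ _
        ((hshift x hx).add (hshift y hy))
        ((psd_smul_one (hT0 x)).add (psd_smul_one (hT0 y))) ?_
      abel
    rw [h1, hadd _ _ (hshift x hx) (hshift y hy),
      hadd _ _ (psd_smul_one (hT0 x)) (psd_smul_one (hT0 y))]
    simp only [hg'def]; ring
  have hg'eq : ∀ x : Matrix (Fin d) (Fin d) ℝ, x.PosSemidef → g' x = g x := by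
    intro x hx
    simp only [hg'def]
    rw [hadd x _ hx (psd_smul_one (hT0 x))]
    ring
  refine ⟨⟨g', hgadd', hg'eq⟩, ?_⟩
  -- Part 2
  intro hmeas
  have hg0 : g 0 = 0 := by
    have h := hadd 0 0 Matrix.PosSemidef.zero Matrix.PosSemidef.zero
    rw [add_zero] at h; linarith
  have hT00 : T (0 : Matrix (Fin d) (Fin d) ℝ) = 0 := by simp [hTdef]
  have hg'0 : g' 0 = 0 := by simp only [hg'def]; rw [hT00]; simp [hg0]
  have hg'neg : ∀ y : Matrix (Fin d) (Fin d) ℝ, y.IsSymm → g' (-y) = -g' y := by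
    intro y hy
    have h := hgadd' y (-y) hy (by unfold Matrix.IsSymm at *; rw [transpose_neg, hy])
    rw [add_neg_cancel, hg'0] at h
    linarith
  -- scaling of T
  have hTsmul : ∀ (t : ℝ) (a : Matrix (Fin d) (Fin d) ℝ), T (t • a) = |t| * T a := by
    intro t a
    simp only [hTdef, Matrix.smul_apply, smul_eq_mul, abs_mul, Finset.mul_sum]
  -- ray homogeneity
  have hray : ∀ a : Matrix (Fin d) (Fin d) ℝ, a.PosSemidef → ∀ t : ℝ, 0 ≤ t →
      g (t • a) = t * g a := by
    intro a ha t ht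
    set F : ℝ → ℝ := fun s => g' (s • a) with hFdef
    have hsymm : ∀ s : ℝ, (s • a).IsSymm := by
      intro s
      unfold Matrix.IsSymm
      rw [transpose_smul, psd_isSymm ha]
    have hFadd : ∀ s u : ℝ, F (s + u) = F s + F u := by
      intro s u
      simp only [hFdef, add_smul]
      exact hgadd' _ _ (hsymm s) (hsymm u)
    -- measurability of F
    have hTam : ∀ s : ℝ, F s = g (s • a + (|s| * T a) • 1) - g ((|s| * T a) • 1) := by
      intro s
      simp only [hFdef, hg'def, hTsmul]
    set A : ℝ → Matrix (Fin d) (Fin d) ℝ := fun s => s • a + (|s| * T a) • 1 with hAdef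
    set B : ℝ → Matrix (Fin d) (Fin d) ℝ := fun s => (|s| * T a) • 1 with hBdef
    have hApsd : ∀ s, (A s).PosSemidef := by
      intro s
      rcases le_or_gt 0 s with hs | hs
      · exact (psd_smul ha hs).add (psd_smul_one (mul_nonneg (abs_nonneg s) (hT0 a)))
      · have hs' : |s| = -s := abs_of_neg hs
        have heq : A s = (-s) • ((-a) + T (-a) • 1) := by
          have hTa : T (-a) = T a := by simp [hTdef]
          simp only [hAdef, hTa, hs']
          module
        rw [heq]
        have hnegsymm : (-a).IsSymm := by
          unfold Matrix.IsSymm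
          rw [transpose_neg, psd_isSymm ha]
        exact psd_smul (psd_shift hnegsymm) (by linarith)
    have hBpsd : ∀ s, (B s).PosSemidef :=
      fun s => psd_smul_one (mul_nonneg (abs_nonneg s) (hT0 a))
    have hAcont : Continuous A := by
      apply Continuous.add
      · exact continuous_id.smul continuous_const
      · exact (continuous_abs.mul continuous_const).smul continuous_const
    have hBcont : Continuous B := (continuous_abs.mul continuous_const).smul continuous_const
    have hgA : Measurable fun s => g (A s) := by
      intro E hE
      have : (fun s => g (A s)) ⁻¹' E
          = A ⁻¹' (g ⁻¹' E ∩ {x : Matrix (Fin d) (Fin d) ℝ | x.PosSemidef}) := by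
        ext s
        simp [Set.mem_preimage, hApsd s]
      rw [this]
      exact hAcont.measurable (hmeas E hE)
    have hgB : Measurable fun s => g (B s) := by
      intro E hE
      have : (fun s => g (B s)) ⁻¹' E
          = B ⁻¹' (g ⁻¹' E ∩ {x : Matrix (Fin d) (Fin d) ℝ | x.PosSemidef}) := by
        ext s
        simp [Set.mem_preimage, hBpsd s]
      rw [this]
      exact hBcont.measurable (hmeas E hE)
    have hFm : Measurable F := by
      have : F = fun s => g (A s) - g (B s) := funext hTam
      rw [this]; exact hgA.sub hgB
    have hFlin := cauchy_measurable_linear F hFadd hFm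
    have hF1 : F 1 = g a := by
      simp only [hFdef, one_smul]
      exact hg'eq a ha
    have := hFlin t
    rw [hF1] at this
    rw [← hg'eq (t • a) (psd_smul ha ht)]
    exact this
  -- full homogeneity of g' on symmetric matrices
  have hhom : ∀ y : Matrix (Fin d) (Fin d) ℝ, y.IsSymm → ∀ r : ℝ, g' (r • y) = r * g' y := by
    intro y hy r
    have hysmul : ∀ s : ℝ, (s • y).IsSymm := by
      intro s; unfold Matrix.IsSymm at *; rw [transpose_smul, hy]
    rcases le_or_gt 0 r with hr | hr
    · have h1 : g' (r • y) = g (r • (y + T y • 1)) - g (r • (T y • 1)) := by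
        refine welldef (r • y) (hysmul r) _ _
          (psd_smul (hshift y hy) hr) (psd_smul (psd_smul_one (hT0 y)) hr) ?_
        rw [← smul_sub]; congr 1; abel
      rw [h1, hray _ (hshift y hy) r hr, hray _ (psd_smul_one (hT0 y)) r hr]
      simp only [hg'def]; ring
    · have hr' : 0 ≤ -r := by linarith
      have h1 : g' (r • y) = g' (-((-r) • y)) := by congr 1; rw [neg_smul, neg_neg]
      rw [h1, hg'neg _ (hysmul (-r))]
      have h2 : g' ((-r) • y) = (-r) * g' y := by
        have h3 : g' ((-r) • y) = g ((-r) • (y + T y • 1)) - g ((-r) • (T y • 1)) := by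
          refine welldef ((-r) • y) (hysmul (-r)) _ _
            (psd_smul (hshift y hy) hr') (psd_smul (psd_smul_one (hT0 y)) hr') ?_
          rw [← smul_sub]; congr 1; abel
        rw [h3, hray _ (hshift y hy) _ hr', hray _ (psd_smul_one (hT0 y)) _ hr']
        simp only [hg'def]; ring
      rw [h2]; ring
  -- basis matrices
  set E : Fin d → Fin d → Matrix (Fin d) (Fin d) ℝ :=
    fun i j => Matrix.single i j 1 + Matrix.single j i 1 with hEdef
  have hEsymm : ∀ i j, (E i j).IsSymm := by
    intro i j
    unfold Matrix.IsSymm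
    ext a b
    simp [hEdef, Matrix.single, Matrix.transpose_apply, Matrix.add_apply]
    rw [add_comm]
    congr 1 <;> · apply if_congr ?_ rfl rfl; exact and_comm
  set c : Matrix (Fin d) (Fin d) ℝ := Matrix.of fun i j => g' (E i j) / 2 with hcdef
  have hcsymm : c.IsSymm := by
    unfold Matrix.IsSymm
    ext i j
    simp only [hcdef, Matrix.transpose_apply, Matrix.of_apply]
    congr 2
    simp only [hEdef]
    rw [add_comm]
  refine ⟨c, hcsymm, ?_⟩
  intro x hx
  have hxs : x.IsSymm := psd_isSymm hx
  -- decomposition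
  have hdecomp : x = ∑ p : Fin d × Fin d, (x p.1 p.2 / 2) • E p.1 p.2 := by
    ext a b
    rw [Matrix.sum_apply]
    simp only [hEdef, Matrix.smul_apply, Matrix.add_apply, Matrix.single,
      Matrix.of_apply, smul_eq_mul]
    rw [Fintype.sum_prod_type]
    simp only [mul_add, Finset.sum_add_distrib]
    have hxab : x b a = x a b := (congrFun (congrFun hxs b) a).symm

    simp only [mul_ite, mul_one, mul_zero]
    have h1 : ∀ f : Fin d → Fin d → ℝ,
        (∑ i, ∑ j, if i = a ∧ j = b then f i j else 0) = f a b := by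
      intro f
      rw [Finset.sum_eq_single a]
      · rw [Finset.sum_eq_single b]
        · simp
        · intro j _ hj; simp [hj]
        · intro h; exact absurd (Finset.mem_univ b) h
      · intro i _ hi; simp [hi]
      · intro h; exact absurd (Finset.mem_univ a) h
    have h2 : (∑ i : Fin d, ∑ j : Fin d, if j = a ∧ i = b then x i j / 2 else 0)
        = x b a / 2 := by
      rw [Finset.sum_comm]
      exact h1 (fun p q => x q p / 2)
    rw [h1 (fun p q => x p q / 2), h2, hxab]
    ring
  -- sum rule for g'
  have hsum : ∀ (s : Finset (Fin d × Fin d)),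
      g' (∑ p ∈ s, (x p.1 p.2 / 2) • E p.1 p.2)
        = ∑ p ∈ s, g' ((x p.1 p.2 / 2) • E p.1 p.2) := by
    intro s
    induction s using Finset.cons_induction with
    | empty => simpa using hg'0
    | cons p s hp ih =>
      rw [Finset.sum_cons, Finset.sum_cons, ← ih]
      refine hgadd' _ _ ?_ ?_
      · unfold Matrix.IsSymm; rw [transpose_smul, hEsymm]
      · unfold Matrix.IsSymm
        rw [Matrix.transpose_sum]
        exact Finset.sum_congr rfl fun q _ => by rw [transpose_smul, hEsymm]
  have hgx : g x = ∑ p : Fin d × Fin d, x p.1 p.2 * c p.1 p.2 := by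
    rw [← hg'eq x hx]
    conv_lhs => rw [hdecomp]
    rw [hsum]
    refine Finset.sum_congr rfl fun p _ => ?_
    rw [hhom _ (hEsymm p.1 p.2)]
    simp only [hcdef, Matrix.of_apply]
    ring
  rw [hgx]
  unfold Matrix.trace
  simp only [Matrix.diag_apply, Matrix.mul_apply]
  rw [Fintype.sum_prod_type]
  refine Finset.sum_congr rfl fun i _ => Finset.sum_congr rfl fun j _ => ?_
  have hxji : x j i = x i j := (congrFun (congrFun hxs j) i).symm
  rw [hxji]; ring
end

section
/- A function f on S_d^+ is the restriction to S_d^+ of a Schwartz function on S_d if and only if f is the restriction to S_d^+ of a smooth function G: S_d → ℝ for which there exists ε > 0 such that for all k, n ∈ ℕ, sup {‖x‖^k · ‖D^n G(x)‖ : x ∈ S_d, dist(x, S_d^+) ≤ ε} < ∞, where D^n G denotes the n-th (total) derivative of G. -/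
attribute [local instance] Matrix.normedAddCommGroup Matrix.normedSpace

/-- The space `S_d` of real symmetric `d×d` matrices, as a submodule of the matrix
space (a finite-dimensional real normed space). -/
def SymMat (d : ℕ) : Submodule ℝ (Matrix (Fin d) (Fin d) ℝ) where
  carrier := {A | A.IsSymm}
  add_mem' := by
    intro a b ha hb
    simp only [Set.mem_setOf_eq, Matrix.IsSymm] at *
    rw [Matrix.transpose_add, ha, hb]
  zero_mem' := by simp [Matrix.IsSymm]
  smul_mem' := by
    intro c a ha
    simp only [Set.mem_setOf_eq, Matrix.IsSymm] at *
    rw [Matrix.transpose_smul, ha]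

/-- The cone `S_d^+` of positive semidefinite matrices inside `S_d`. -/
def psdSet (d : ℕ) : Set (SymMat d) :=
  {x : SymMat d | (x : Matrix (Fin d) (Fin d) ℝ).PosSemidef}

open MeasureTheory Metric Set Filter Function ContinuousLinearMap
open scoped Convolution Topology

section Aux

variable {E : Type} [NormedAddCommGroup E] [NormedSpace ℝ E] [MeasurableSpace E]
  [BorelSpace E] [FiniteDimensional ℝ E]

/-- Bound on all iterated derivatives of a convolution of a bounded locally integrable
function with a smooth compactly supported function. -/
lemma convBound (μ : Measure E) [μ.IsAddHaarMeasure] [μ.IsNegInvariant] [SigmaFinite μ]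
    (f : E → ℝ) (hf : LocallyIntegrable f μ) (hfb : ∀ x, ‖f x‖ ≤ 1) (n : ℕ) :
    ∀ (F F' : Type) [NormedAddCommGroup F] [NormedSpace ℝ F] [NormedAddCommGroup F']
      [NormedSpace ℝ F'] (L : ℝ →L[ℝ] F →L[ℝ] F') (g : E → F),
      HasCompactSupport g → ContDiff ℝ (⊤ : ℕ∞) g →
      ∃ C : ℝ, ∀ x, ‖iteratedFDeriv ℝ n (f ⋆[L, μ] g) x‖ ≤ C := by
  induction n with
  | zero =>
    intro F F' _ _ _ _ L g hcg hg
    refine ⟨‖L‖ * ∫ t, ‖g t‖ ∂μ, fun x => ?_⟩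
    rw [norm_iteratedFDeriv_zero]
    have hgi : Integrable g μ := hg.continuous.integrable_of_hasCompactSupport hcg
    have hgix : Integrable (fun t => g (x - t)) μ := hgi.comp_sub_left x
    have h1 : ‖(f ⋆[L, μ] g) x‖ ≤ ∫ t, ‖L‖ * ‖g (x - t)‖ ∂μ := by
      rw [convolution_def]
      refine norm_integral_le_of_norm_le (hgix.norm.const_mul ‖L‖)
        (Filter.Eventually.of_forall fun t => ?_)
      calc ‖L (f t) (g (x - t))‖ ≤ ‖L‖ * ‖f t‖ * ‖g (x - t)‖ := L.le_opNorm₂ _ _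
        _ ≤ ‖L‖ * 1 * ‖g (x - t)‖ :=
            mul_le_mul_of_nonneg_right
              (mul_le_mul_of_nonneg_left (hfb t) (norm_nonneg L)) (norm_nonneg _)
        _ = ‖L‖ * ‖g (x - t)‖ := by ring
    calc ‖(f ⋆[L, μ] g) x‖ ≤ ∫ t, ‖L‖ * ‖g (x - t)‖ ∂μ := h1
      _ = ‖L‖ * ∫ t, ‖g (x - t)‖ ∂μ := integral_const_mul _ _
      _ = ‖L‖ * ∫ t, ‖g t‖ ∂μ := by
          rw [integral_sub_left_eq_self (fun t => ‖g t‖) μ x]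
  | succ n ih =>
    intro F F' _ _ _ _ L g hcg hg
    obtain ⟨C, hC⟩ := ih (E →L[ℝ] F) (E →L[ℝ] F') (L.precompR E) (fderiv ℝ g) (hcg.fderiv ℝ)
      (hg.fderiv_right (by exact_mod_cast le_top))
    refine ⟨C, fun x => ?_⟩
    have hfd : fderiv ℝ (f ⋆[L, μ] g) = f ⋆[L.precompR E, μ] fderiv ℝ g :=
      funext fun y =>
        (hcg.hasFDerivAt_convolution_right L hf (hg.of_le (by exact_mod_cast le_top)) y).fderiv
    rw [← norm_iteratedFDeriv_fderiv, hfd]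
    exact hC x

/-- Existence of a smooth cutoff function with globally bounded derivatives which equals `1`
near a set `s` and vanishes away from it. -/
lemma exists_cutoff (s : Set E) {ε : ℝ} (hε : 0 < ε) :
    ∃ χ : E → ℝ, ContDiff ℝ (⊤ : ℕ∞) χ ∧
      (∀ n : ℕ, ∃ C : ℝ, ∀ x, ‖iteratedFDeriv ℝ n χ x‖ ≤ C) ∧
      (∀ x, Metric.infDist x s ≤ ε / 4 → χ x = 1) ∧
      (∀ x, 5 * ε / 8 < Metric.infDist x s → χ x = 0) := by
  set μ := (Module.finBasis ℝ E).addHaar with hμ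
  haveI : μ.Regular := by rw [hμ, Module.Basis.addHaar_def]; infer_instance
  set T := {y : E | Metric.infDist y s ≤ ε / 2} with hTdef
  have hT : IsClosed T := isClosed_le (continuous_infDist_pt s) continuous_const
  set f := T.indicator (fun _ => (1 : ℝ)) with hfdef
  have hfb : ∀ x, ‖f x‖ ≤ 1 := by
    intro x
    by_cases h : x ∈ T
    · simp [hfdef, Set.indicator_of_mem h]
    · simp [hfdef, Set.indicator_of_notMem h]
  have hf : LocallyIntegrable f μ :=
    (locallyIntegrable_const (1 : ℝ)).indicator hT.measurableSet
  set φ : ContDiffBump (0 : E) := ⟨ε / 16, ε / 8, by positivity, by linarith⟩ with hφdef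
  set ψ := φ.normed μ with hψdef
  have hψc : HasCompactSupport ψ := φ.hasCompactSupport_normed
  have hψs : ContDiff ℝ (⊤ : ℕ∞) ψ := φ.contDiff_normed
  set χ := f ⋆[ContinuousLinearMap.lsmul ℝ ℝ, μ] ψ with hχdef
  have hLflip : (ContinuousLinearMap.lsmul ℝ ℝ : ℝ →L[ℝ] ℝ →L[ℝ] ℝ).flip
      = ContinuousLinearMap.lsmul ℝ ℝ := by
    ext x y
    simp [mul_comm]
  have hswap : χ = ψ ⋆[ContinuousLinearMap.lsmul ℝ ℝ, μ] f := by
    rw [hχdef, ← hLflip, convolution_flip, hLflip]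
  refine ⟨χ, ?_, ?_, ?_, ?_⟩
  · exact hψc.contDiff_convolution_right _ hf hψs
  · intro n
    exact convBound μ f hf hfb n ℝ ℝ (ContinuousLinearMap.lsmul ℝ ℝ) ψ hψc hψs
  · intro x hx
    have hmem : ∀ y ∈ ball x φ.rOut, f y = f x := by
      intro y hy
      have hxy : y ∈ T := by
        have h1 : Metric.infDist y s ≤ Metric.infDist x s + dist y x :=
          Metric.infDist_le_infDist_add_dist
      -- dist y x < φ.rOut = ε/8
        have h2 : dist y x < ε / 8 := by simpa [hφdef] using hy
        simp only [hTdef, Set.mem_setOf_eq]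
        linarith
      have hxx : x ∈ T := by
        simp only [hTdef, Set.mem_setOf_eq]
        linarith
      rw [hfdef]
      simp [Set.indicator_of_mem hxy, Set.indicator_of_mem hxx]
    have := ContDiffBump.normed_convolution_eq_right (μ := μ) (φ := φ) hmem
    rw [hswap, hψdef, this, hfdef]
    have hxx : x ∈ T := by
      simp only [hTdef, Set.mem_setOf_eq]
      linarith
    simp [Set.indicator_of_mem hxx]
  · intro x hx
    by_contra h
    have hsupp : x ∈ Function.support χ := h
    have h2 := support_convolution_subset (ContinuousLinearMap.lsmul ℝ ℝ) (f := f) (g := ψ)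
      (μ := μ) hsupp
    obtain ⟨a, ha, b, hb, hab⟩ := h2
    have haT : a ∈ T := by
      have := Set.support_indicator_subset (s := T) (f := fun _ => (1 : ℝ)) ha
      exact this
    have hbb : ‖b‖ < ε / 8 := by
      have : b ∈ ball (0 : E) φ.rOut := φ.support_normed_eq.le hb
      simpa [hφdef] using this
    have h3 : Metric.infDist x s ≤ Metric.infDist a s + dist x a :=
      Metric.infDist_le_infDist_add_dist
    have h4 : dist x a = ‖b‖ := by
      rw [← hab]
      simp [dist_eq_norm]
    have h5 : Metric.infDist a s ≤ ε / 2 := haT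
    linarith

end Aux

/-- A function `f` on `S_d^+` is the restriction to `S_d^+` of a
Schwartz function on `S_d` (a smooth function all of whose derivatives decay faster
than any polynomial) if and only if `f` is the restriction to `S_d^+` of a smooth
function `G : S_d → ℝ` for which there exists `ε > 0` such that for all `k, n ∈ ℕ`,
`sup {‖x‖^k · ‖DⁿG(x)‖ : x ∈ S_d, dist(x, S_d^+) ≤ ε} < ∞`. -/
theorem schwartz_restriction_characterization {d : ℕ} (f : SymMat d → ℝ) :
    (∃ F : SymMat d → ℝ, (∀ n : ℕ, ContDiff ℝ n F) ∧
      (∀ k n : ℕ, ∃ C : ℝ, ∀ x : SymMat d,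
        ‖x‖ ^ k * ‖iteratedFDeriv ℝ n F x‖ ≤ C) ∧
      (∀ x ∈ psdSet d, f x = F x)) ↔
    (∃ G : SymMat d → ℝ, (∀ n : ℕ, ContDiff ℝ n G) ∧
      (∃ ε > (0 : ℝ), ∀ k n : ℕ, ∃ C : ℝ, ∀ x : SymMat d,
        Metric.infDist x (psdSet d) ≤ ε →
        ‖x‖ ^ k * ‖iteratedFDeriv ℝ n G x‖ ≤ C) ∧
      (∀ x ∈ psdSet d, f x = G x)) := by
  constructor
  · rintro ⟨F, h1, h2, h3⟩
    exact ⟨F, h1, ⟨1, one_pos, fun k n => (h2 k n).imp fun C hC x _ => hC x⟩, h3⟩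
  · rintro ⟨G, hGs, ⟨ε, hε, hG⟩, hGf⟩
    letI : MeasurableSpace (SymMat d) := borel _
    haveI : BorelSpace (SymMat d) := ⟨rfl⟩
    obtain ⟨χ, hχs, hχb, hχ1, hχ0⟩ := @exists_cutoff (SymMat d) _ _ (borel _) this _ (psdSet d) _ hε
    have h0mem : (0 : SymMat d) ∈ psdSet d := by
      show ((0 : SymMat d) : Matrix (Fin d) (Fin d) ℝ).PosSemidef
      simpa using Matrix.PosSemidef.zero (n := Fin d) (R := ℝ)
    have h0dist : Metric.infDist (0 : SymMat d) (psdSet d) = 0 :=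
      Metric.infDist_zero_of_mem h0mem
    refine ⟨fun x => χ x * G x, fun n => (hχs.of_le (by exact_mod_cast le_top)).mul (hGs n), fun k n => ?_,
      fun x hx => ?_⟩
    · choose Cχ hCχ using hχb
      choose CG hCG using hG
      have hCχ0 : ∀ i, 0 ≤ Cχ i := fun i => le_trans (norm_nonneg _) (hCχ i 0)
      have hCG0 : ∀ j, 0 ≤ CG k j := fun j =>
        le_trans (by positivity) (hCG k j 0 (by rw [h0dist]; exact le_of_lt hε))
      refine ⟨∑ i ∈ Finset.range (n + 1), (n.choose i : ℝ) * Cχ i * CG k (n - i), fun x => ?_⟩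
      by_cases hx : Metric.infDist x (psdSet d) ≤ ε
      · have hleib := norm_iteratedFDeriv_mul_le (𝕜 := ℝ) (n := n)
          (hχs.of_le (by exact_mod_cast le_top) : ContDiff ℝ (n : ℕ∞) χ) (hGs n) x le_rfl
        calc ‖x‖ ^ k * ‖iteratedFDeriv ℝ n (fun y => χ y * G y) x‖
            ≤ ‖x‖ ^ k * ∑ i ∈ Finset.range (n + 1),
                (n.choose i : ℝ) * ‖iteratedFDeriv ℝ i χ x‖ *
                  ‖iteratedFDeriv ℝ (n - i) G x‖ := by
              exact mul_le_mul_of_nonneg_left hleib (by positivity)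
          _ = ∑ i ∈ Finset.range (n + 1),
                (n.choose i : ℝ) * ‖iteratedFDeriv ℝ i χ x‖ *
                  (‖x‖ ^ k * ‖iteratedFDeriv ℝ (n - i) G x‖) := by
              rw [Finset.mul_sum]
              exact Finset.sum_congr rfl fun i _ => by ring
          _ ≤ ∑ i ∈ Finset.range (n + 1), (n.choose i : ℝ) * Cχ i * CG k (n - i) := by
              refine Finset.sum_le_sum fun i _ => ?_
              have h1 := hCχ i x
              have h2 := hCG k (n - i) x hx
              have hb : (0 : ℝ) ≤ ‖x‖ ^ k * ‖iteratedFDeriv ℝ (n - i) G x‖ := by positivity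
              refine mul_le_mul ?_ h2 hb (mul_nonneg (by positivity) (hCχ0 i))
              exact mul_le_mul_of_nonneg_left h1 (by positivity)
      · have hU : IsOpen {y : SymMat d | 5 * ε / 8 < Metric.infDist y (psdSet d)} :=
          isOpen_lt continuous_const (continuous_infDist_pt _)
        have hxU : x ∈ {y : SymMat d | 5 * ε / 8 < Metric.infDist y (psdSet d)} := by
          have : ε < Metric.infDist x (psdSet d) := lt_of_not_ge hx
          simp only [Set.mem_setOf_eq]
          linarith
        set U := {y : SymMat d | 5 * ε / 8 < Metric.infDist y (psdSet d)} with hUdef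
        have hEq : Set.EqOn (fun y => χ y * G y) (fun _ => (0 : ℝ)) U := fun y hy => by
          simp only
          rw [hχ0 y hy, zero_mul]
        have hzero : iteratedFDeriv ℝ n (fun y => χ y * G y) x = 0 := by
          rw [← iteratedFDerivWithin_of_isOpen (f := fun y => χ y * G y) n hU hxU,
            hEq.iteratedFDerivWithin n hxU,
            iteratedFDerivWithin_of_isOpen (f := fun _ => (0 : ℝ)) n hU hxU,
            iteratedFDeriv_zero_fun]
          rfl
        rw [hzero]
        simp only [norm_zero, mul_zero]
        refine Finset.sum_nonneg fun i _ => ?_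
        have := hCχ0 i
        have := hCG0 (n - i)
        positivity
    · rw [hGf x hx]
      show G x = χ x * G x
      rw [hχ1 x (by rw [Metric.infDist_zero_of_mem hx]; positivity), one_mul]
end
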